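/- arXiv:2405.20250 — 7 statements merged into one kernel-verified Lean document; each statement's English description precedes it below -/
import Mathlib

section
/- Let A be a measurable space, μ a probability measure on A, and Z, Z' : A → ℝ bounded measurable functions. Then the total variation of the signed measure π(Z) - π(Z') satisfies |π(Z) - π(Z')|(A) ≤ 2·sup_{a∈A} |Z(a) - Z'(a)|. -/
open MeasureTheory

/-- The Gibbs measure associated with a measurable function `Z : A → ℝ` and reference
probability measure `μ`: the measure absolutely continuous with respect to `μ` with density
`a ↦ exp (Z a) / ∫ exp (Z a') μ(da')`. -/
noncomputable def gibbs {A : Type*} [MeasurableSpace A] (μ : Measure A) (Z : A → ℝ) :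
    Measure A :=
  μ.withDensity fun a => ENNReal.ofReal (Real.exp (Z a) / ∫ a', Real.exp (Z a') ∂μ)

lemma toSignedMeasure_withDensity_ofReal {A : Type*} [MeasurableSpace A] (μ : Measure A)
    {g : A → ℝ} (hg : Integrable g μ) (h0 : ∀ a, 0 ≤ g a)
    [inst : IsFiniteMeasure (μ.withDensity fun a => ENNReal.ofReal (g a))] :
    (μ.withDensity fun a => ENNReal.ofReal (g a)).toSignedMeasure = μ.withDensityᵥ g := by
  haveI := isFiniteMeasure_withDensity_ofReal hg.neg.2
  rw [withDensityᵥ_eq_withDensity_pos_part_sub_withDensity_neg_part hg]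
  have h1 : (μ.withDensity fun x => ENNReal.ofReal (-g x)) = 0 := by
    rw [show (fun x => ENNReal.ofReal (-g x)) = fun _ => (0 : ENNReal) from
      funext fun a => ENNReal.ofReal_eq_zero.2 (neg_nonpos.2 (h0 a))]
    exact withDensity_zero
  rw [Measure.toSignedMeasure_congr h1, Measure.toSignedMeasure_zero, sub_zero]

/-- For a probability measure `μ` and bounded measurable `Z, Z' : A → ℝ`,
the total variation of the signed measure `π(Z) - π(Z')` satisfies
`|π(Z) - π(Z')|(A) ≤ 2·sup_a |Z a - Z' a|`.
(The finiteness of the Gibbs measures, recorded here as instance hypotheses, is automatic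
from the stated boundedness assumptions.) -/
theorem totalVariation_gibbs_sub_gibbs_le
    {A : Type*} [MeasurableSpace A] (μ : Measure A) [IsProbabilityMeasure μ]
    (Z Z' : A → ℝ) (hZmeas : Measurable Z) (hZ'meas : Measurable Z')
    (hZb : ∃ C, ∀ a, |Z a| ≤ C) (hZ'b : ∃ C, ∀ a, |Z' a| ≤ C)
    [IsFiniteMeasure (gibbs μ Z)] [IsFiniteMeasure (gibbs μ Z')] :
    ((gibbs μ Z).toSignedMeasure - (gibbs μ Z').toSignedMeasure).totalVariation Set.univ
      ≤ ENNReal.ofReal (2 * ⨆ a, |Z a - Z' a|) := by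
  obtain ⟨C, hC⟩ := hZb
  obtain ⟨C', hC'⟩ := hZ'b
  rcases isEmpty_or_nonempty A with hA | hA
  · exfalso
    have h1 : μ Set.univ = 1 := measure_univ
    rw [Set.univ_eq_empty_iff.2 hA, measure_empty] at h1
    exact zero_ne_one h1
  set s := ⨆ a, |Z a - Z' a| with hs_def
  have hbdd : BddAbove (Set.range fun a => |Z a - Z' a|) := by
    refine ⟨C + C', ?_⟩
    rintro x ⟨a, rfl⟩
    calc |Z a - Z' a| ≤ |Z a| + |Z' a| := abs_sub _ _
      _ ≤ C + C' := add_le_add (hC a) (hC' a)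
  have hsle : ∀ a, |Z a - Z' a| ≤ s := fun a => le_ciSup hbdd a
  have hs0 : 0 ≤ s := le_trans (abs_nonneg _) (hsle (Classical.arbitrary A))
  set N := ∫ a, Real.exp (Z a) ∂μ with hN_def
  set N' := ∫ a, Real.exp (Z' a) ∂μ with hN'_def
  have hintZ : Integrable (fun a => Real.exp (Z a)) μ := by
    refine (integrable_const (Real.exp C)).mono'
      (Real.measurable_exp.comp hZmeas).aestronglyMeasurable (ae_of_all _ fun a => ?_)
    rw [Real.norm_eq_abs, abs_of_pos (Real.exp_pos _)]
    exact Real.exp_le_exp.2 (le_of_abs_le (hC a))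
  have hintZ' : Integrable (fun a => Real.exp (Z' a)) μ := by
    refine (integrable_const (Real.exp C')).mono'
      (Real.measurable_exp.comp hZ'meas).aestronglyMeasurable (ae_of_all _ fun a => ?_)
    rw [Real.norm_eq_abs, abs_of_pos (Real.exp_pos _)]
    exact Real.exp_le_exp.2 (le_of_abs_le (hC' a))
  have hN0 : 0 < N := by
    have : Real.exp (-C) ≤ N := by
      calc Real.exp (-C) = ∫ _, Real.exp (-C) ∂μ := by simp
        _ ≤ N := integral_mono (integrable_const _) hintZ fun a =>
            Real.exp_le_exp.2 (neg_le_of_abs_le (hC a))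
    exact lt_of_lt_of_le (Real.exp_pos _) this
  have hN'0 : 0 < N' := by
    have : Real.exp (-C') ≤ N' := by
      calc Real.exp (-C') = ∫ _, Real.exp (-C') ∂μ := by simp
        _ ≤ N' := integral_mono (integrable_const _) hintZ' fun a =>
            Real.exp_le_exp.2 (neg_le_of_abs_le (hC' a))
    exact lt_of_lt_of_le (Real.exp_pos _) this
  set f := fun a => Real.exp (Z a) / N with hf_def
  set f' := fun a => Real.exp (Z' a) / N' with hf'_def
  have hfmeas : Measurable f := (Real.measurable_exp.comp hZmeas).div_const N
  have hf'meas : Measurable f' := (Real.measurable_exp.comp hZ'meas).div_const N'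
  have hfint : Integrable f μ := hintZ.div_const N
  have hf'int : Integrable f' μ := hintZ'.div_const N'
  have hf0 : ∀ a, 0 ≤ f a := fun a => div_nonneg (Real.exp_pos _).le hN0.le
  have hf'0 : ∀ a, 0 ≤ f' a := fun a => div_nonneg (Real.exp_pos _).le hN'0.le
  have hintf : ∫ a, f a ∂μ = 1 := by
    rw [hf_def]
    rw [integral_div]
    exact div_self hN0.ne'
  have hintf' : ∫ a, f' a ∂μ = 1 := by
    rw [hf'_def]
    rw [integral_div]
    exact div_self hN'0.ne'
  -- identify the signed measures
  have hgibbsZ : gibbs μ Z = μ.withDensity fun a => ENNReal.ofReal (f a) := rfl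
  have hgibbsZ' : gibbs μ Z' = μ.withDensity fun a => ENNReal.ofReal (f' a) := rfl
  haveI hIf : IsFiniteMeasure (μ.withDensity fun a => ENNReal.ofReal (f a)) := by
    rw [← hgibbsZ]; infer_instance
  haveI hIf' : IsFiniteMeasure (μ.withDensity fun a => ENNReal.ofReal (f' a)) := by
    rw [← hgibbsZ']; infer_instance
  have hsmZ : (gibbs μ Z).toSignedMeasure = μ.withDensityᵥ f := by
    rw [Measure.toSignedMeasure_congr hgibbsZ]
    exact toSignedMeasure_withDensity_ofReal μ hfint hf0
  have hsmZ' : (gibbs μ Z').toSignedMeasure = μ.withDensityᵥ f' := by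
    rw [Measure.toSignedMeasure_congr hgibbsZ']
    exact toSignedMeasure_withDensity_ofReal μ hf'int hf'0
  set g := fun a => f a - f' a with hg_def
  have hgmeas : Measurable g := hfmeas.sub hf'meas
  have hgint : Integrable g μ := hfint.sub hf'int
  have hsm : (gibbs μ Z).toSignedMeasure - (gibbs μ Z').toSignedMeasure
      = μ.withDensityᵥ g := by
    rw [hsmZ, hsmZ', ← withDensityᵥ_sub hfint hf'int]
    rfl
  have hjd := SignedMeasure.toJordanDecomposition_eq_of_eq_add_withDensity
    (s := (gibbs μ Z).toSignedMeasure - (gibbs μ Z').toSignedMeasure) (t := 0)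
    hgmeas hgint (VectorMeasure.MutuallySingular.zero_left) (by rw [zero_add, hsm])
  rw [SignedMeasure.totalVariation, hjd]
  simp only [SignedMeasure.toJordanDecomposition_zero, JordanDecomposition.zero_posPart,
    JordanDecomposition.zero_negPart, zero_add, Measure.add_apply]
  rw [withDensity_apply _ MeasurableSet.univ, withDensity_apply _ MeasurableSet.univ,
    setLIntegral_univ, setLIntegral_univ]
  have hmeas1 : Measurable fun a => ENNReal.ofReal (g a) := hgmeas.ennreal_ofReal
  rw [← lintegral_add_left hmeas1]
  have hpt : (fun a => ENNReal.ofReal (g a) + ENNReal.ofReal (-g a))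
      = fun a => ENNReal.ofReal |g a| := by
    funext a
    rcases le_total 0 (g a) with h | h
    · rw [abs_of_nonneg h, ENNReal.ofReal_eq_zero.2 (neg_nonpos.2 h) , add_zero]
    · rw [abs_of_nonpos h, ENNReal.ofReal_eq_zero.2 h, zero_add]
  rw [hpt, ← ofReal_integral_eq_lintegral_ofReal hgint.abs (ae_of_all _ fun a => abs_nonneg _)]
  refine ENNReal.ofReal_le_ofReal ?_
  -- now the real inequality : ∫ |f - f'| ≤ 2 s
  set m := fun a => min (Real.exp (Z a)) (Real.exp (Z' a)) with hm_def
  have hmint : Integrable m μ := hintZ.inf hintZ'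
  set M := max N N' with hM_def
  have hM0 : 0 < M := lt_max_of_lt_left hN0
  have hintmin : Integrable (fun a => min (f a) (f' a)) μ := hfint.inf hf'int
  have hmin_pt : ∀ a, m a / M ≤ min (f a) (f' a) := by
    intro a
    refine le_min ?_ ?_
    · exact div_le_div₀ (Real.exp_pos _).le (min_le_left _ _) hN0 (le_max_left _ _)
    · exact div_le_div₀ (Real.exp_pos _).le (min_le_right _ _) hN'0 (le_max_right _ _)
  have hm_lb : ∀ a, Real.exp (-s) * Real.exp (Z a) ≤ m a := by
    intro a
    refine le_min ?_ ?_
    · calc Real.exp (-s) * Real.exp (Z a) ≤ 1 * Real.exp (Z a) :=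
          mul_le_mul_of_nonneg_right (Real.exp_le_one_iff.2 (neg_nonpos.2 hs0))
            (Real.exp_pos _).le
        _ = Real.exp (Z a) := one_mul _
    · rw [← Real.exp_add]
      refine Real.exp_le_exp.2 ?_
      have := hsle a
      rw [abs_le] at this
      linarith [this.2]
  have hm_lb' : ∀ a, Real.exp (-s) * Real.exp (Z' a) ≤ m a := by
    intro a
    refine le_min ?_ ?_
    · rw [← Real.exp_add]
      refine Real.exp_le_exp.2 ?_
      have := hsle a
      rw [abs_le] at this
      linarith [this.1]
    · calc Real.exp (-s) * Real.exp (Z' a) ≤ 1 * Real.exp (Z' a) :=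
          mul_le_mul_of_nonneg_right (Real.exp_le_one_iff.2 (neg_nonpos.2 hs0))
            (Real.exp_pos _).le
        _ = Real.exp (Z' a) := one_mul _
  have hintm_lb : Real.exp (-s) * M ≤ ∫ a, m a ∂μ := by
    rcases max_cases N N' with ⟨hmax, _⟩ | ⟨hmax, _⟩
    · rw [hM_def, hmax, ← integral_const_mul]
      exact integral_mono (hintZ.const_mul _) hmint hm_lb
    · rw [hM_def, hmax, ← integral_const_mul]
      exact integral_mono (hintZ'.const_mul _) hmint hm_lb'
  have hmin_lb : Real.exp (-s) ≤ ∫ a, min (f a) (f' a) ∂μ := by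
    calc Real.exp (-s) = Real.exp (-s) * M / M := by field_simp
      _ ≤ (∫ a, m a ∂μ) / M := (div_le_div_iff_of_pos_right hM0).2 hintm_lb
      _ = ∫ a, m a / M ∂μ := (integral_div _ _).symm
      _ ≤ ∫ a, min (f a) (f' a) ∂μ := integral_mono (hmint.div_const M) hintmin hmin_pt
  have habs_pt : ∀ a, |g a| = f a + f' a - 2 * min (f a) (f' a) := by
    intro a
    rw [hg_def]
    rcases le_total (f a) (f' a) with h | h
    · rw [abs_of_nonpos (sub_nonpos.2 h), min_eq_left h]; ring
    · rw [abs_of_nonneg (sub_nonneg.2 h), min_eq_right h]; ring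
  have hkey : ∫ a, |g a| ∂μ = 2 - 2 * ∫ a, min (f a) (f' a) ∂μ := by
    have e0 : ∫ a, |g a| ∂μ = ∫ a, (f a + f' a - 2 * min (f a) (f' a)) ∂μ :=
      integral_congr_ae (ae_of_all _ habs_pt)
    have e1 : ∫ a, (f a + f' a - 2 * min (f a) (f' a)) ∂μ
        = (∫ a, (f a + f' a) ∂μ) - ∫ a, 2 * min (f a) (f' a) ∂μ :=
      integral_sub (hfint.add hf'int) (hintmin.const_mul 2)
    have e2 : ∫ a, (f a + f' a) ∂μ = (∫ a, f a ∂μ) + ∫ a, f' a ∂μ :=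
      integral_add hfint hf'int
    have e3 : ∫ a, 2 * min (f a) (f' a) ∂μ = 2 * ∫ a, min (f a) (f' a) ∂μ :=
      integral_const_mul _ _
    rw [e0, e1, e2, e3, hintf, hintf']
    ring
  rw [hkey]
  have hexp : 1 - s ≤ Real.exp (-s) := by
    have := Real.add_one_le_exp (-s)
    linarith
  linarith [hmin_lb]
end

section
/- Let A be a measurable space, μ a probability measure on A, and Z, Z' : A → ℝ bounded measurable functions. Then | KL(π(Z)|μ) - KL(π(Z')|μ) | ≤ 2·( 2·‖Z‖_∞ + 1 )·‖Z - Z'‖_∞. -/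
open MeasureTheory
open scoped NNReal ENNReal

/-- The (real-valued) Kullback–Leibler divergence `KL(ν|μ) = ∫ ln (dν/dμ) dν`, expressed via
the Radon–Nikodym derivative; for the Gibbs measures considered here `ν ≪ μ` and the
integral is finite. -/
noncomputable def KLreal {A : Type*} [MeasurableSpace A] (ν μ : Measure A) : ℝ :=
  ∫ a, Real.log (ν.rnDeriv μ a).toReal ∂ν

section Aux

variable {A : Type*} [MeasurableSpace A] {μ : Measure A} [IsProbabilityMeasure μ]

lemma integrable_of_abs_le {f : A → ℝ} (hf : Measurable f) {C : ℝ} (h : ∀ a, |f a| ≤ C) :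
    Integrable f μ :=
  (integrable_const C).mono' hf.aestronglyMeasurable
    (Filter.Eventually.of_forall fun a => by simpa [Real.norm_eq_abs] using h a)

lemma exp_int {Z : A → ℝ} (hZ : Measurable Z) {C : ℝ} (hb : ∀ a, |Z a| ≤ C) :
    Integrable (fun a => Real.exp (Z a)) μ :=
  integrable_of_abs_le hZ.exp (C := Real.exp C) fun a => by
    rw [abs_of_pos (Real.exp_pos _)]
    exact Real.exp_le_exp.2 ((abs_le.1 (hb a)).2)

lemma c_pos {Z : A → ℝ} (hZ : Measurable Z) {C : ℝ} (hb : ∀ a, |Z a| ≤ C) :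
    0 < ∫ a, Real.exp (Z a) ∂μ := by
  have h0 : Real.exp (-C) = ∫ _a, Real.exp (-C) ∂μ := by simp
  have h1 : (∫ _a, Real.exp (-C) ∂μ) ≤ ∫ a, Real.exp (Z a) ∂μ :=
    integral_mono (integrable_const _) (exp_int hZ hb)
      fun a => Real.exp_le_exp.2 (neg_le_of_abs_le (hb a))
  linarith [Real.exp_pos (-C)]

lemma KL_eq {Z : A → ℝ} (hZ : Measurable Z) {C : ℝ} (hb : ∀ a, |Z a| ≤ C) :
    KLreal (gibbs μ Z) μ
      = ∫ a, (Z a - Real.log (∫ a', Real.exp (Z a') ∂μ)) *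
          (Real.exp (Z a) / ∫ a', Real.exp (Z a') ∂μ) ∂μ := by
  have hc : 0 < ∫ a', Real.exp (Z a') ∂μ := c_pos hZ hb
  set c : ℝ := ∫ a', Real.exp (Z a') ∂μ with hcdef
  have hρpos : ∀ a, 0 < Real.exp (Z a) / c := fun a => div_pos (Real.exp_pos _) hc
  have hmeas : Measurable fun a => ENNReal.ofReal (Real.exp (Z a) / c) :=
    (hZ.exp.div_const c).ennreal_ofReal
  have h1 : (gibbs μ Z).rnDeriv μ =ᵐ[μ] fun a => ENNReal.ofReal (Real.exp (Z a) / c) :=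
    Measure.rnDeriv_withDensity μ hmeas
  have habs : gibbs μ Z ≪ μ := withDensity_absolutelyContinuous μ _
  have h2 : (gibbs μ Z).rnDeriv μ =ᵐ[gibbs μ Z]
      fun a => ENNReal.ofReal (Real.exp (Z a) / c) := habs.ae_le h1
  have h3 : KLreal (gibbs μ Z) μ = ∫ a, Real.log (Real.exp (Z a) / c) ∂(gibbs μ Z) := by
    unfold KLreal
    refine integral_congr_ae (h2.mono fun a ha => ?_)
    have ha' : (gibbs μ Z).rnDeriv μ a = ENNReal.ofReal (Real.exp (Z a) / c) := ha
    dsimp only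
    rw [ha', ENNReal.toReal_ofReal (hρpos a).le]
  rw [h3]
  have h4 : gibbs μ Z = μ.withDensity
      fun a => ((Real.toNNReal (Real.exp (Z a) / c) : ℝ≥0) : ℝ≥0∞) := rfl
  have hmeas' : Measurable fun a => Real.toNNReal (Real.exp (Z a) / c) :=
    (hZ.exp.div_const c).real_toNNReal
  rw [h4, integral_withDensity_eq_integral_smul hmeas']
  refine integral_congr_ae (Filter.Eventually.of_forall fun a => ?_)
  dsimp only
  rw [NNReal.smul_def, smul_eq_mul, Real.coe_toNNReal _ (hρpos a).le,
    Real.log_div (Real.exp_ne_zero _) hc.ne', Real.log_exp]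
  ring

end Aux

/-- For a probability measure `μ` and bounded measurable `Z, Z' : A → ℝ`,
`|KL(π(Z)|μ) - KL(π(Z')|μ)| ≤ 2·(2·‖Z‖_∞ + 1)·‖Z - Z'‖_∞`, where `π(·)` denotes the Gibbs
measure with respect to `μ` and `‖·‖_∞` the supremum norm. -/
theorem kl_gibbs_locally_lipschitz
    {A : Type*} [MeasurableSpace A] (μ : Measure A) [IsProbabilityMeasure μ]
    (Z Z' : A → ℝ) (hZmeas : Measurable Z) (hZ'meas : Measurable Z')
    (hZb : ∃ C, ∀ a, |Z a| ≤ C) (hZ'b : ∃ C, ∀ a, |Z' a| ≤ C) :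
    |KLreal (gibbs μ Z) μ - KLreal (gibbs μ Z') μ|
      ≤ 2 * (2 * (⨆ a, |Z a|) + 1) * ⨆ a, |Z a - Z' a| := by
  obtain ⟨C, hC⟩ := hZb
  obtain ⟨C', hC'⟩ := hZ'b
  set M : ℝ := ⨆ a, |Z a| with hMdef
  set ε : ℝ := ⨆ a, |Z a - Z' a| with hεdef
  have hM : ∀ a, |Z a| ≤ M := fun a =>
    le_ciSup ⟨C, by rintro y ⟨b, rfl⟩; exact hC b⟩ a
  have hMnn : 0 ≤ M := Real.iSup_nonneg fun a => abs_nonneg _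
  have hbdd : BddAbove (Set.range fun a => |Z a - Z' a|) := by
    refine ⟨C + C', ?_⟩
    rintro y ⟨b, rfl⟩
    calc |Z b - Z' b| ≤ |Z b| + |Z' b| := abs_sub _ _
    _ ≤ C + C' := add_le_add (hC b) (hC' b)
  have hε : ∀ a, |Z a - Z' a| ≤ ε := fun a => le_ciSup hbdd a
  have hεnn : 0 ≤ ε := Real.iSup_nonneg fun a => abs_nonneg _
  have hM' : ∀ a, |Z' a| ≤ M + ε := fun a => by
    calc |Z' a| = |Z a - (Z a - Z' a)| := by ring_nf
    _ ≤ |Z a| + |Z a - Z' a| := abs_sub _ _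
    _ ≤ M + ε := add_le_add (hM a) (hε a)
  have hc : 0 < ∫ a, Real.exp (Z a) ∂μ := c_pos hZmeas hM
  have hc' : 0 < ∫ a, Real.exp (Z' a) ∂μ := c_pos hZ'meas hM'
  set c : ℝ := ∫ a, Real.exp (Z a) ∂μ with hcdef
  set c' : ℝ := ∫ a, Real.exp (Z' a) ∂μ with hc'def
  set L : ℝ := Real.log c with hLdef
  set L' : ℝ := Real.log c' with hL'def
  set ρ : A → ℝ := fun a => Real.exp (Z a) / c with hρdef
  set ρ' : A → ℝ := fun a => Real.exp (Z' a) / c' with hρ'def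
  have hρnn : ∀ a, 0 ≤ ρ a := fun a => (div_pos (Real.exp_pos _) hc).le
  have hρ'nn : ∀ a, 0 ≤ ρ' a := fun a => (div_pos (Real.exp_pos _) hc').le
  have hρbd : ∀ a, |ρ a| ≤ Real.exp M / c := fun a => by
    rw [abs_of_nonneg (hρnn a)]
    exact div_le_div_of_nonneg_right (Real.exp_le_exp.2 ((abs_le.1 (hM a)).2)) hc.le
  have hρ'bd : ∀ a, |ρ' a| ≤ Real.exp (M + ε) / c' := fun a => by
    rw [abs_of_nonneg (hρ'nn a)]
    exact div_le_div_of_nonneg_right (Real.exp_le_exp.2 ((abs_le.1 (hM' a)).2)) hc'.le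
  have hρmeas : Measurable ρ := hZmeas.exp.div_const c
  have hρ'meas : Measurable ρ' := hZ'meas.exp.div_const c'
  have hρint : Integrable ρ μ := integrable_of_abs_le hρmeas hρbd
  have hρ'int : Integrable ρ' μ := integrable_of_abs_le hρ'meas hρ'bd
  have hintρ : ∫ a, ρ a ∂μ = 1 := by
    simp only [hρdef]
    rw [integral_div]
    exact div_self hc.ne'
  have hintρ' : ∫ a, ρ' a ∂μ = 1 := by
    simp only [hρ'def]
    rw [integral_div]
    exact div_self hc'.ne'
  -- comparison of normalizing constants
  have hZle : ∀ a, Real.exp (Z a) ≤ Real.exp ε * Real.exp (Z' a) := fun a => by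
    rw [← Real.exp_add]
    exact Real.exp_le_exp.2 (by linarith [(abs_le.1 (hε a)).2])
  have hZ'le : ∀ a, Real.exp (Z' a) ≤ Real.exp ε * Real.exp (Z a) := fun a => by
    rw [← Real.exp_add]
    exact Real.exp_le_exp.2 (by linarith [(abs_le.1 (hε a)).1])
  have hcc' : c ≤ Real.exp ε * c' := by
    calc c = ∫ a, Real.exp (Z a) ∂μ := rfl
    _ ≤ ∫ a, Real.exp ε * Real.exp (Z' a) ∂μ :=
      integral_mono (exp_int hZmeas hM) ((exp_int hZ'meas hM').const_mul _) hZle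
    _ = Real.exp ε * c' := by rw [integral_const_mul]
  have hc'c : c' ≤ Real.exp ε * c := by
    calc c' = ∫ a, Real.exp (Z' a) ∂μ := rfl
    _ ≤ ∫ a, Real.exp ε * Real.exp (Z a) ∂μ :=
      integral_mono (exp_int hZ'meas hM') ((exp_int hZmeas hM).const_mul _) hZ'le
    _ = Real.exp ε * c := by rw [integral_const_mul]
  have hLbd : |L' - L| ≤ ε := by
    rw [abs_sub_le_iff]
    constructor
    · have h1 : L' ≤ Real.log (Real.exp ε * c) := by
        exact Real.log_le_log hc' hc'c
      rw [Real.log_mul (Real.exp_ne_zero _) hc.ne', Real.log_exp] at h1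
      linarith
    · have h1 : L ≤ Real.log (Real.exp ε * c') := by
        exact Real.log_le_log hc hcc'
      rw [Real.log_mul (Real.exp_ne_zero _) hc'.ne', Real.log_exp] at h1
      linarith
  -- pointwise ratio bounds
  have hrat1 : ∀ a, ρ a ≤ Real.exp (2 * ε) * ρ' a := fun a => by
    have key : Real.exp (Z a) * c' ≤ (Real.exp ε * Real.exp (Z' a)) * (Real.exp ε * c) :=
      mul_le_mul (hZle a) hc'c hc'.le
        (mul_nonneg (Real.exp_pos _).le (Real.exp_pos _).le)
    simp only [hρdef, hρ'def]
    rw [mul_div_assoc', div_le_div_iff₀ hc hc', two_mul, Real.exp_add]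
    nlinarith [key]
  have hrat2 : ∀ a, ρ' a ≤ Real.exp (2 * ε) * ρ a := fun a => by
    have key : Real.exp (Z' a) * c ≤ (Real.exp ε * Real.exp (Z a)) * (Real.exp ε * c') :=
      mul_le_mul (hZ'le a) hcc' hc.le
        (mul_nonneg (Real.exp_pos _).le (Real.exp_pos _).le)
    simp only [hρdef, hρ'def]
    rw [mul_div_assoc', div_le_div_iff₀ hc' hc, two_mul, Real.exp_add]
    nlinarith [key]
  -- total variation bound
  have habsmeas : Measurable fun a => |ρ a - ρ' a| := (hρmeas.sub hρ'meas).abs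
  have habsbd : ∀ a, |(fun a => |ρ a - ρ' a|) a| ≤ Real.exp M / c + Real.exp (M + ε) / c' :=
    fun a => by
      rw [abs_abs]
      exact (abs_sub _ _).trans (add_le_add (hρbd a) (hρ'bd a))
  have habsint : Integrable (fun a => |ρ a - ρ' a|) μ := integrable_of_abs_le habsmeas habsbd
  have hTV : (∫ a, |ρ a - ρ' a| ∂μ) ≤ 4 * ε := by
    rcases le_or_gt ε (1 / 2) with hhalf | hhalf
    · have hexp1 : (1 : ℝ) ≤ Real.exp (2 * ε) := Real.one_le_exp (by linarith)
      have hpt : ∀ a, |ρ a - ρ' a| ≤ (Real.exp (2 * ε) - 1) * ρ' a := fun a => by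
        rw [abs_sub_le_iff]
        constructor
        · nlinarith [hrat1 a, hρ'nn a]
        · nlinarith [hrat2 a, hρ'nn a, hρnn a, Real.exp_pos (2 * ε),
            mul_nonneg (hρ'nn a) (sq_nonneg (Real.exp (2 * ε) - 1))]
      have hexp2 : Real.exp (2 * ε) - 1 ≤ 4 * ε := by
        have h1 : |Real.exp (2 * ε) - 1| ≤ 2 * |2 * ε| :=
          Real.abs_exp_sub_one_le (by rw [abs_of_nonneg (by linarith : (0:ℝ) ≤ 2 * ε)]; linarith)
        rw [abs_of_nonneg (by linarith : (0:ℝ) ≤ 2 * ε)] at h1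
        have h2 := (abs_le.1 h1).2
        linarith
      calc (∫ a, |ρ a - ρ' a| ∂μ) ≤ ∫ a, (Real.exp (2 * ε) - 1) * ρ' a ∂μ :=
        integral_mono habsint (hρ'int.const_mul _) hpt
      _ = (Real.exp (2 * ε) - 1) * 1 := by rw [integral_const_mul, hintρ']
      _ ≤ 4 * ε := by linarith
    · have hpt2 : ∀ a, |ρ a - ρ' a| ≤ ρ a + ρ' a := fun a => by
        calc |ρ a - ρ' a| ≤ |ρ a| + |ρ' a| := abs_sub _ _
        _ = ρ a + ρ' a := by rw [abs_of_nonneg (hρnn a), abs_of_nonneg (hρ'nn a)]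
      calc (∫ a, |ρ a - ρ' a| ∂μ) ≤ ∫ a, (ρ a + ρ' a) ∂μ :=
        integral_mono habsint (hρint.add hρ'int) hpt2
      _ = 2 := by rw [integral_add hρint hρ'int, hintρ, hintρ']; norm_num
      _ ≤ 4 * ε := by linarith
  -- integrability of the products
  have hZρint : Integrable (fun a => Z a * ρ a) μ :=
    integrable_of_abs_le (hZmeas.mul hρmeas) (C := M * (Real.exp M / c)) fun a => by
      rw [abs_mul]
      exact mul_le_mul (hM a) (hρbd a) (abs_nonneg _) hMnn
  have hZρ'int : Integrable (fun a => Z a * ρ' a) μ :=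
    integrable_of_abs_le (hZmeas.mul hρ'meas) (C := M * (Real.exp (M + ε) / c')) fun a => by
      rw [abs_mul]
      exact mul_le_mul (hM a) (hρ'bd a) (abs_nonneg _) hMnn
  have hZ'ρ'int : Integrable (fun a => Z' a * ρ' a) μ :=
    integrable_of_abs_le (hZ'meas.mul hρ'meas) (C := (M + ε) * (Real.exp (M + ε) / c'))
      fun a => by
        rw [abs_mul]
        exact mul_le_mul (hM' a) (hρ'bd a) (abs_nonneg _) (by linarith)
  -- identification of the KL divergences
  have hKeq : KLreal (gibbs μ Z) μ = (∫ a, Z a * ρ a ∂μ) - L := by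
    rw [KL_eq hZmeas hM]
    have h1 : (fun a => (Z a - Real.log (∫ a', Real.exp (Z a') ∂μ)) *
        (Real.exp (Z a) / ∫ a', Real.exp (Z a') ∂μ)) = fun a => Z a * ρ a - L * ρ a := by
      funext a; simp only [hρdef]; ring
    rw [h1, integral_sub hZρint (hρint.const_mul L), integral_const_mul, hintρ, mul_one]
  have hK'eq : KLreal (gibbs μ Z') μ = (∫ a, Z' a * ρ' a ∂μ) - L' := by
    rw [KL_eq hZ'meas hM']
    have h1 : (fun a => (Z' a - Real.log (∫ a', Real.exp (Z' a') ∂μ)) *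
        (Real.exp (Z' a) / ∫ a', Real.exp (Z' a') ∂μ)) = fun a => Z' a * ρ' a - L' * ρ' a := by
      funext a; simp only [hρ'def]; ring
    rw [h1, integral_sub hZ'ρ'int (hρ'int.const_mul L'), integral_const_mul, hintρ', mul_one]
  -- decomposition of the difference
  have e1 : ∫ a, Z a * (ρ a - ρ' a) ∂μ = (∫ a, Z a * ρ a ∂μ) - ∫ a, Z a * ρ' a ∂μ := by
    rw [← integral_sub hZρint hZρ'int]
    refine integral_congr_ae (Filter.Eventually.of_forall fun a => ?_)
    ring
  have e2 : ∫ a, (Z a - Z' a) * ρ' a ∂μ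
      = (∫ a, Z a * ρ' a ∂μ) - ∫ a, Z' a * ρ' a ∂μ := by
    rw [← integral_sub hZρ'int hZ'ρ'int]
    refine integral_congr_ae (Filter.Eventually.of_forall fun a => ?_)
    ring
  have key : KLreal (gibbs μ Z) μ - KLreal (gibbs μ Z') μ
      = (∫ a, Z a * (ρ a - ρ' a) ∂μ) + (∫ a, (Z a - Z' a) * ρ' a ∂μ) + (L' - L) := by
    rw [hKeq, hK'eq, e1, e2]; ring
  -- bounds on the two integral terms
  have habsbd2 : ∀ a, |ρ a - ρ' a| ≤ Real.exp M / c + Real.exp (M + ε) / c' :=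
    fun a => (abs_sub _ _).trans (add_le_add (hρbd a) (hρ'bd a))
  have hA1 : |∫ a, Z a * (ρ a - ρ' a) ∂μ| ≤ M * (4 * ε) := by
    have hZd_int : Integrable (fun a => |Z a| * |ρ a - ρ' a|) μ :=
      integrable_of_abs_le (hZmeas.abs.mul (hρmeas.sub hρ'meas).abs)
        (C := M * (Real.exp M / c + Real.exp (M + ε) / c')) fun a => by
          rw [abs_of_nonneg (mul_nonneg (abs_nonneg _) (abs_nonneg _))]
          exact mul_le_mul (hM a) (habsbd2 a) (abs_nonneg _) hMnn
    have h0 : |∫ a, Z a * (ρ a - ρ' a) ∂μ| ≤ ∫ a, |Z a| * |ρ a - ρ' a| ∂μ := by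
      simpa [Real.norm_eq_abs, abs_mul] using
        norm_integral_le_integral_norm (μ := μ) fun a => Z a * (ρ a - ρ' a)
    calc |∫ a, Z a * (ρ a - ρ' a) ∂μ| ≤ ∫ a, |Z a| * |ρ a - ρ' a| ∂μ := h0
    _ ≤ ∫ a, M * |ρ a - ρ' a| ∂μ :=
      integral_mono hZd_int (habsint.const_mul M) fun a =>
        mul_le_mul_of_nonneg_right (hM a) (abs_nonneg _)
    _ = M * ∫ a, |ρ a - ρ' a| ∂μ := integral_const_mul _ _
    _ ≤ M * (4 * ε) := mul_le_mul_of_nonneg_left hTV hMnn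
  have hA2 : |∫ a, (Z a - Z' a) * ρ' a ∂μ| ≤ ε := by
    have hint : Integrable (fun a => |Z a - Z' a| * |ρ' a|) μ :=
      integrable_of_abs_le ((hZmeas.sub hZ'meas).abs.mul hρ'meas.abs)
        (C := ε * (Real.exp (M + ε) / c')) fun a => by
          rw [abs_of_nonneg (mul_nonneg (abs_nonneg _) (abs_nonneg _))]
          exact mul_le_mul (hε a) (hρ'bd a) (abs_nonneg _) hεnn
    have h0 : |∫ a, (Z a - Z' a) * ρ' a ∂μ| ≤ ∫ a, |Z a - Z' a| * |ρ' a| ∂μ := by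
      simpa [Real.norm_eq_abs, abs_mul] using
        norm_integral_le_integral_norm (μ := μ) fun a => (Z a - Z' a) * ρ' a
    calc |∫ a, (Z a - Z' a) * ρ' a ∂μ| ≤ ∫ a, |Z a - Z' a| * |ρ' a| ∂μ := h0
    _ ≤ ∫ a, ε * ρ' a ∂μ :=
      integral_mono hint (hρ'int.const_mul ε) fun a => by
        rw [abs_of_nonneg (hρ'nn a)]
        exact mul_le_mul_of_nonneg_right (hε a) (hρ'nn a)
    _ = ε * 1 := by rw [integral_const_mul, hintρ']
    _ = ε := mul_one ε
  -- conclusion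
  rw [key]
  have htri : |(∫ a, Z a * (ρ a - ρ' a) ∂μ) + (∫ a, (Z a - Z' a) * ρ' a ∂μ) + (L' - L)|
      ≤ |∫ a, Z a * (ρ a - ρ' a) ∂μ| + |∫ a, (Z a - Z' a) * ρ' a ∂μ| + |L' - L| :=
    (abs_add_le _ _).trans (add_le_add_left (abs_add_le _ _) _)
  have hfin : 2 * (2 * M + 1) * ε = M * (4 * ε) + ε + ε := by ring
  linarith
end

section
/- Let O ⊂ ℝ^d be a nonempty bounded domain (open, connected and bounded) with closure Ō, let A ⊂ ℝ^k be a nonempty convex compact set with nonempty interior, and let μ be the uniform probability measure on A (normalized Lebesgue measure restricted to A). Let h : Ō × A → ℝ be continuous and suppose that for every x ∈ Ō: (i) the function a ↦ h(x,a) attains its minimum over A at a unique point, and this point lies in the interior of A; (ii) a ↦ h(x,a) is twice differentiable on A, and the second derivative map (x,a) ↦ D²_{aa}h(x,a) is continuous on Ō × A. Then there exist C ≥ 0 and τ₀ > 0 such that for all x ∈ Ō and all τ ∈ (0, τ₀], 0 ≤ -τ·ln( ∫_A exp( -h(x,a)/τ ) μ(da) ) - min_{a∈A} h(x,a) ≤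 C·τ·ln(1/τ). -/
open MeasureTheory Metric

set_option maxHeartbeats 1000000

/-- uniform Laplace asymptotics, unique interior minimizer. Let
`O ⊂ ℝ^d` be a nonempty bounded domain, `A ⊂ ℝ^k` a nonempty convex compact set, `μ` the
uniform probability measure on `A`, and `h : Ō × A → ℝ` continuous such that for each
`x ∈ Ō` the map `a ↦ h(x,a)` has a unique minimizer over `A`, lying in the interior of `A`,
and is twice differentiable with second derivative jointly continuous on `Ō × A`. Then
there are `C ≥ 0` and `τ₀ > 0` with
`0 ≤ -τ·ln ∫_A e^{-h(x,a)/τ} μ(da) - min_{a∈A} h(x,a) ≤ C·τ·ln(1/τ)`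
for all `x ∈ Ō` and `τ ∈ (0, τ₀]`. -/
theorem laplace_asymptotics_unique_interior_minimizer
    {d k : ℕ}
    (O : Set (EuclideanSpace ℝ (Fin d))) (hOopen : IsOpen O) (hOconn : IsConnected O)
    (hObdd : Bornology.IsBounded O)
    (A : Set (EuclideanSpace ℝ (Fin k))) (hAne : A.Nonempty) (hAconv : Convex ℝ A)
    (hAcomp : IsCompact A)
    (μ : Measure (EuclideanSpace ℝ (Fin k)))
    (hμ : μ = (volume A)⁻¹ • volume.restrict A)
    (h : EuclideanSpace ℝ (Fin d) → EuclideanSpace ℝ (Fin k) → ℝ)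
    (hcont : ContinuousOn (fun q : EuclideanSpace ℝ (Fin d) × EuclideanSpace ℝ (Fin k) =>
      h q.1 q.2) (closure O ×ˢ A))
    (hmin : ∀ x ∈ closure O, ∃ a ∈ interior A, IsMinOn (h x) A a ∧
      ∀ a' ∈ A, IsMinOn (h x) A a' → a' = a)
    (h' : EuclideanSpace ℝ (Fin d) → EuclideanSpace ℝ (Fin k) →
      (EuclideanSpace ℝ (Fin k) →L[ℝ] ℝ))
    (h'' : EuclideanSpace ℝ (Fin d) → EuclideanSpace ℝ (Fin k) →
      (EuclideanSpace ℝ (Fin k) →L[ℝ] EuclideanSpace ℝ (Fin k) →L[ℝ] ℝ))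
    (hderiv1 : ∀ x ∈ closure O, ∀ a ∈ A, HasFDerivWithinAt (h x) (h' x a) A a)
    (hderiv2 : ∀ x ∈ closure O, ∀ a ∈ A, HasFDerivWithinAt (h' x) (h'' x a) A a)
    (hcont2 : ContinuousOn (fun q : EuclideanSpace ℝ (Fin d) × EuclideanSpace ℝ (Fin k) =>
      h'' q.1 q.2) (closure O ×ˢ A)) :
    ∃ C ≥ (0 : ℝ), ∃ τ₀ > (0 : ℝ), ∀ x ∈ closure O, ∀ τ : ℝ, 0 < τ → τ ≤ τ₀ →
      0 ≤ -τ * Real.log (∫ a, Real.exp (-h x a / τ) ∂μ) - sInf (h x '' A) ∧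
      -τ * Real.log (∫ a, Real.exp (-h x a / τ) ∂μ) - sInf (h x '' A)
        ≤ C * τ * Real.log (1 / τ) := by
  classical
  subst hμ
  -- compactness of the closure of O and a base point
  have hOc : IsCompact (closure O) :=
    Metric.isCompact_of_isClosed_isBounded isClosed_closure hObdd.closure
  obtain ⟨x₀, hx₀⟩ : (closure O).Nonempty := hOconn.nonempty.closure
  -- a ball inside A
  obtain ⟨z, hzint, -, -⟩ := hmin x₀ hx₀
  obtain ⟨r0, hr0, hballint⟩ := Metric.isOpen_iff.mp isOpen_interior z hzint
  have hballA : ball z r0 ⊆ A := hballint.trans interior_subset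
  have hzA : z ∈ A := interior_subset hzint
  -- uniform bound on the second derivative
  obtain ⟨M, hM⟩ := (hOc.prod hAcomp).exists_bound_of_continuousOn
    (f := fun q : EuclideanSpace ℝ (Fin d) × EuclideanSpace ℝ (Fin k) => h'' q.1 q.2) hcont2
  have hM0 : 0 ≤ M := le_trans (norm_nonneg (h'' x₀ z)) (hM (x₀, z) ⟨hx₀, hzA⟩)
  -- diameter bound for A
  obtain ⟨R, hRA⟩ := hAcomp.isBounded.subset_closedBall 0
  have hR0 : 0 ≤ R := by
    have := hRA hzA; rw [mem_closedBall_iff_norm] at this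
    exact le_trans (norm_nonneg _) (by simpa using this)
  have hD : ∀ a ∈ A, ∀ b ∈ A, ‖a - b‖ ≤ 2 * R := by
    intro a ha b hb
    have h1 := hRA ha; have h2 := hRA hb
    rw [mem_closedBall_iff_norm] at h1 h2
    simp only [sub_zero] at h1 h2
    calc ‖a - b‖ ≤ ‖a‖ + ‖b‖ := norm_sub_le _ _
      _ ≤ 2 * R := by linarith
  set L : ℝ := M * (2 * R) with hLdef
  have hL0 : 0 ≤ L := by positivity
  set L' : ℝ := max L 1 with hL'def
  have hL'1 : 1 ≤ L' := le_max_right _ _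
  set c₁ : ℝ := max (L' * (2 * R + r0)) 1 with hc₁def
  have hc₁1 : 1 ≤ c₁ := le_max_right _ _
  have hc₁0 : 0 < c₁ := lt_of_lt_of_le one_pos hc₁1
  -- measure-theoretic constants
  set u : ℝ := (volume (ball (0 : EuclideanSpace ℝ (Fin k)) 1)).toReal with hudef
  have hu0 : 0 < u := ENNReal.toReal_pos (measure_ball_pos volume _ one_pos).ne'
    measure_ball_lt_top.ne
  set v : ℝ := (volume A).toReal with hvdef
  have hvA_fin : volume A < ⊤ := hAcomp.measure_lt_top
  have hvA_pos : 0 < volume A :=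
    lt_of_lt_of_le (measure_ball_pos volume z hr0) (measure_mono hballA)
  have hv0 : 0 < v := ENNReal.toReal_pos hvA_pos.ne' hvA_fin.ne
  set P : ℝ := v⁻¹ * u * r0 ^ k with hPdef
  have hP0 : 0 < P := by positivity
  set Cmax : ℝ := max (1 - Real.log P + k * Real.log c₁) 0 with hCmaxdef
  have hCmax0 : 0 ≤ Cmax := le_max_right _ _
  refine ⟨k + Cmax, by positivity, Real.exp (-1), Real.exp_pos _, ?_⟩
  intro x hx τ hτ hττ₀
  have hτ1 : τ ≤ 1 := hττ₀.trans (by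
    have : Real.exp (-1) < Real.exp 0 := Real.exp_lt_exp.mpr (by norm_num)
    simpa using this.le)
  have hlog1 : 1 ≤ Real.log (1 / τ) := by
    have h1 : Real.exp 1 ≤ 1 / τ := by
      rw [le_div_iff₀ hτ]
      calc Real.exp 1 * τ ≤ Real.exp 1 * Real.exp (-1) :=
            mul_le_mul_of_nonneg_left hττ₀ (Real.exp_pos 1).le
        _ = 1 := by rw [← Real.exp_add]; norm_num
    calc (1 : ℝ) = Real.log (Real.exp 1) := (Real.log_exp 1).symm
      _ ≤ Real.log (1 / τ) := Real.log_le_log (Real.exp_pos 1) h1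
  -- the minimizer for this x
  obtain ⟨a₁, ha₁int, ha₁min, -⟩ := hmin x hx
  have ha₁A : a₁ ∈ A := interior_subset ha₁int
  set m : ℝ := h x a₁ with hmdef
  have hm_inf : sInf (h x '' A) = m := by
    refine IsLeast.csInf_eq ⟨⟨a₁, ha₁A, rfl⟩, ?_⟩
    rintro y ⟨b, hb, rfl⟩
    exact isMinOn_iff.mp ha₁min b hb
  -- the gradient vanishes at the minimizer
  have hA_nhds : A ∈ nhds a₁ := mem_interior_iff_mem_nhds.mp ha₁int
  have hd0 : h' x a₁ = 0 :=
    (ha₁min.isLocalMin hA_nhds).hasFDerivAt_eq_zero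
      ((hderiv1 x hx a₁ ha₁A).hasFDerivAt hA_nhds)
  -- Lipschitz bound on h x
  have hgradbd : ∀ a ∈ A, ‖h' x a‖ ≤ L := by
    intro a ha
    have := hAconv.norm_image_sub_le_of_norm_hasFDerivWithin_le
      (fun b hb => hderiv2 x hx b hb) (fun b hb => hM (x, b) ⟨hx, hb⟩) ha₁A ha
    rw [hd0, sub_zero] at this
    calc ‖h' x a‖ ≤ M * ‖a - a₁‖ := this
      _ ≤ M * (2 * R) := mul_le_mul_of_nonneg_left (hD a ha a₁ ha₁A) hM0
  have hLip : ∀ a ∈ A, h x a - m ≤ L * ‖a - a₁‖ := by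
    intro a ha
    have := hAconv.norm_image_sub_le_of_norm_hasFDerivWithin_le
      (fun b hb => hderiv1 x hx b hb) hgradbd ha₁A ha
    calc h x a - m ≤ |h x a - h x a₁| := le_abs_self _
      _ ≤ L * ‖a - a₁‖ := by rwa [Real.norm_eq_abs] at this
  -- the small ball
  set t : ℝ := τ / c₁ with htdef
  have ht0 : 0 < t := by positivity
  have ht1 : t ≤ 1 := by
    rw [htdef, div_le_one hc₁0]; exact hτ1.trans hc₁1
  set w : EuclideanSpace ℝ (Fin k) := a₁ + t • (z - a₁) with hwdef
  set B' : Set (EuclideanSpace ℝ (Fin k)) := ball w (t * r0) with hB'def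
  have hB'A : B' ⊆ A := by
    intro p hp
    rw [hB'def, mem_ball_iff_norm] at hp
    set y : EuclideanSpace ℝ (Fin k) := a₁ + t⁻¹ • (p - a₁) with hydef
    have hyz : p - w = t • (y - z) := by
      simp only [hydef, hwdef, smul_sub, smul_add, smul_smul,
        mul_inv_cancel₀ ht0.ne', one_smul]
      abel
    have hyball : y ∈ ball z r0 := by
      rw [mem_ball_iff_norm]
      have hn : ‖p - w‖ = t * ‖y - z‖ := by
        rw [hyz, norm_smul, Real.norm_eq_abs, abs_of_pos ht0]
      refine lt_of_mul_lt_mul_left ?_ ht0.le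
      rw [← hn]; exact hp
    have hpy : p = (1 - t) • a₁ + t • y := by
      simp only [hydef, smul_add, smul_smul, mul_inv_cancel₀ ht0.ne', one_smul, sub_smul]
      abel
    rw [hpy]
    exact hAconv ha₁A (hballA hyball) (by linarith) ht0.le (by ring)
  have hB'h : ∀ p ∈ B', h x p ≤ m + τ := by
    intro p hp
    rw [hB'def, mem_ball_iff_norm] at hp
    have h1 : ‖p - a₁‖ ≤ t * (r0 + 2 * R) := by
      have hwa : ‖w - a₁‖ ≤ t * (2 * R) := by
        rw [hwdef, add_sub_cancel_left, norm_smul, Real.norm_eq_abs, abs_of_pos ht0]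
        exact mul_le_mul_of_nonneg_left (hD z hzA a₁ ha₁A) ht0.le
      calc ‖p - a₁‖ ≤ ‖p - w‖ + ‖w - a₁‖ := by
            simpa using norm_add_le (p - w) (w - a₁)
        _ ≤ t * r0 + t * (2 * R) := add_le_add hp.le hwa
        _ = t * (r0 + 2 * R) := by ring
    have h2 : L * ‖p - a₁‖ ≤ τ := by
      have hLL' : L ≤ L' := le_max_left _ _
      have h3 : L * (t * (r0 + 2 * R)) ≤ L' * (2 * R + r0) * t := by
        have h4 : 0 ≤ r0 + 2 * R := by positivity
        nlinarith [mul_le_mul_of_nonneg_right (mul_le_mul_of_nonneg_right hLL' h4) ht0.le]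
      have h5 : L' * (2 * R + r0) * t ≤ c₁ * t := by
        have : L' * (2 * R + r0) ≤ c₁ := le_max_left _ _
        nlinarith
      have h6 : c₁ * t = τ := by rw [htdef]; field_simp
      calc L * ‖p - a₁‖ ≤ L * (t * (r0 + 2 * R)) :=
            mul_le_mul_of_nonneg_left h1 hL0
        _ ≤ c₁ * t := h3.trans h5
        _ = τ := h6
    have h7 := hLip p (hB'A (by rw [hB'def, mem_ball_iff_norm]; exact hp))
    have h8 := norm_nonneg (p - a₁)
    nlinarith
  -- integrability
  have hA_meas : MeasurableSet A := hAcomp.isClosed.measurableSet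
  have hfc : ContinuousOn (fun a => Real.exp (-h x a / τ)) A := by
    have h1 : ContinuousOn (fun a : EuclideanSpace ℝ (Fin k) => h x a) A := by
      have h2 : ContinuousOn
          (fun a : EuclideanSpace ℝ (Fin k) =>
            ((x, a) : EuclideanSpace ℝ (Fin d) × EuclideanSpace ℝ (Fin k))) A :=
        (continuous_const.prodMk continuous_id).continuousOn
      exact hcont.comp h2 (fun a ha => ⟨hx, ha⟩)
    exact Real.continuous_exp.comp_continuousOn ((h1.neg).div_const τ)
  have hfi : IntegrableOn (fun a => Real.exp (-h x a / τ)) A volume :=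
    hfc.integrableOn_compact hAcomp
  have hfiB : IntegrableOn (fun a => Real.exp (-h x a / τ)) B' volume :=
    hfi.mono_set hB'A
  set J : ℝ := ∫ a in A, Real.exp (-h x a / τ) with hJdef
  have hJub : J ≤ Real.exp (-m / τ) * v := by
    have h1 : ∀ a ∈ A, Real.exp (-h x a / τ) ≤ Real.exp (-m / τ) := by
      intro a ha
      apply Real.exp_le_exp.mpr
      rw [div_le_div_iff₀ hτ hτ]
      have := isMinOn_iff.mp ha₁min a ha
      nlinarith
    calc J ≤ ∫ _ in A, Real.exp (-m / τ) :=
          setIntegral_mono_on hfi (integrableOn_const hvA_fin.ne) hA_meas h1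
      _ = Real.exp (-m / τ) * v := by
          rw [setIntegral_const, smul_eq_mul, mul_comm]; rfl
  have hBmeas : MeasurableSet B' := by rw [hB'def]; exact measurableSet_ball
  have hBvol : (volume B').toReal = (t * r0) ^ k * u := by
    rw [hB'def, Measure.addHaar_ball_of_pos volume w (by positivity),
      finrank_euclideanSpace_fin, ENNReal.toReal_mul,
      ENNReal.toReal_ofReal (by positivity), hudef]
  have hJlb : Real.exp (-(m + τ) / τ) * ((t * r0) ^ k * u) ≤ J := by
    have h1 : ∫ _ in B', Real.exp (-(m + τ) / τ) ≤ ∫ a in B', Real.exp (-h x a / τ) := by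
      refine setIntegral_mono_on
        (integrableOn_const (lt_of_le_of_lt (measure_mono hB'A) hvA_fin).ne)
        hfiB hBmeas ?_
      intro p hp
      apply Real.exp_le_exp.mpr
      rw [div_le_div_iff₀ hτ hτ]
      have := hB'h p hp
      nlinarith
    have h2 : ∫ a in B', Real.exp (-h x a / τ) ≤ J :=
      setIntegral_mono_set hfi
        (Filter.Eventually.of_forall fun a => (Real.exp_pos _).le)
        (HasSubset.Subset.eventuallyLE hB'A)
    calc Real.exp (-(m + τ) / τ) * ((t * r0) ^ k * u)
        = ∫ _ in B', Real.exp (-(m + τ) / τ) := by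
          rw [setIntegral_const, smul_eq_mul, show volume.real B' = _ from hBvol, mul_comm]
      _ ≤ J := h1.trans h2
  -- the integral w.r.t. μ
  have hIdef : (∫ a, Real.exp (-h x a / τ) ∂((volume A)⁻¹ • volume.restrict A)) = v⁻¹ * J := by
    rw [integral_smul_measure, ENNReal.toReal_inv, smul_eq_mul, hJdef, hvdef]
  rw [hm_inf, hIdef]
  have hQ0 : 0 < v⁻¹ * ((t * r0) ^ k * u) := by positivity
  have hIub : v⁻¹ * J ≤ Real.exp (-m / τ) := by
    calc v⁻¹ * J ≤ v⁻¹ * (Real.exp (-m / τ) * v) :=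
          mul_le_mul_of_nonneg_left hJub (by positivity)
      _ = Real.exp (-m / τ) := by field_simp
  have hIlb : Real.exp (-(m + τ) / τ) * (v⁻¹ * ((t * r0) ^ k * u)) ≤ v⁻¹ * J := by
    calc Real.exp (-(m + τ) / τ) * (v⁻¹ * ((t * r0) ^ k * u))
        = v⁻¹ * (Real.exp (-(m + τ) / τ) * ((t * r0) ^ k * u)) := by ring
      _ ≤ v⁻¹ * J := mul_le_mul_of_nonneg_left hJlb (by positivity)
  have hI0 : 0 < v⁻¹ * J := lt_of_lt_of_le (by positivity) hIlb
  constructor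
  · -- lower bound
    have hlogub : Real.log (v⁻¹ * J) ≤ -m / τ := by
      calc Real.log (v⁻¹ * J) ≤ Real.log (Real.exp (-m / τ)) := Real.log_le_log hI0 hIub
        _ = -m / τ := Real.log_exp _
    have h2 := mul_le_mul_of_nonneg_left hlogub hτ.le
    have h3 : τ * (-m / τ) = -m := by field_simp
    rw [h3] at h2
    linarith
  · -- upper bound
    have hloglb : -(m + τ) / τ + Real.log (v⁻¹ * ((t * r0) ^ k * u)) ≤ Real.log (v⁻¹ * J) := by
      calc -(m + τ) / τ + Real.log (v⁻¹ * ((t * r0) ^ k * u))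
          = Real.log (Real.exp (-(m + τ) / τ) * (v⁻¹ * ((t * r0) ^ k * u))) := by
            rw [Real.log_mul (Real.exp_ne_zero _) hQ0.ne', Real.log_exp]
        _ ≤ Real.log (v⁻¹ * J) := Real.log_le_log (by positivity) hIlb
    have hQP : Real.log (v⁻¹ * ((t * r0) ^ k * u)) = Real.log P + k * Real.log t := by
      have hq : v⁻¹ * ((t * r0) ^ k * u) = P * t ^ k := by
        rw [hPdef, mul_pow]; ring
      rw [hq, Real.log_mul hP0.ne' (by positivity), Real.log_pow]
    have hlogt : Real.log t = Real.log τ - Real.log c₁ := by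
      rw [htdef, Real.log_div hτ.ne' hc₁0.ne']
    have hloginv : Real.log (1 / τ) = -Real.log τ := by rw [one_div, Real.log_inv]
    rw [hQP, hlogt] at hloglb
    have H2 := mul_le_mul_of_nonneg_left hloglb hτ.le
    have hfield : τ * (-(m + τ) / τ + (Real.log P + k * (Real.log τ - Real.log c₁)))
        = -(m + τ) + τ * Real.log P + k * τ * Real.log τ - k * τ * Real.log c₁ := by
      field_simp; ring
    rw [hfield] at H2
    have hCle : 1 - Real.log P + k * Real.log c₁ ≤ Cmax := le_max_left _ _
    have hτlog : τ ≤ τ * Real.log (1 / τ) := le_mul_of_one_le_right hτ.le hlog1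
    have hstep : -τ * Real.log (v⁻¹ * J) - m
        ≤ τ * (1 - Real.log P + k * Real.log c₁) + k * τ * Real.log (1 / τ) := by
      rw [hloginv]; linarith [H2]
    have hstep2 : τ * (1 - Real.log P + k * Real.log c₁) ≤ Cmax * (τ * Real.log (1 / τ)) := by
      calc τ * (1 - Real.log P + k * Real.log c₁) ≤ τ * Cmax :=
            mul_le_mul_of_nonneg_left hCle hτ.le
        _ ≤ Cmax * (τ * Real.log (1 / τ)) := by
            have := mul_le_mul_of_nonneg_left hτlog hCmax0
            linarith
    calc -τ * Real.log (v⁻¹ * J) - m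
        ≤ τ * (1 - Real.log P + k * Real.log c₁) + k * τ * Real.log (1 / τ) := hstep
      _ ≤ Cmax * (τ * Real.log (1 / τ)) + k * τ * Real.log (1 / τ) := by linarith
      _ = (k + Cmax) * τ * Real.log (1 / τ) := by ring
end

section
/- Let α < β be real numbers, A = [α, β], and let μ be the uniform probability measure on [α, β]. For τ > 0 define 𝔥_τ(p) = -τ·ln( ∫_A exp( -( p·a + a²/2 )/τ ) μ(da) ) and define 𝔥(p) = min_{a∈[α,β]} ( p·a + a²/2 ). Then for every M > 0 there exist τ₀ > 0 and C ≥ 0 such that for all p ∈ [-M, M] and all τ ∈ (0, τ₀], 0 ≤ 𝔥_τ(p) - 𝔥(p) ≤ C·τ·ln(1/τ). -/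
open MeasureTheory

/-- Lemma 6.2: uniform Laplace asymptotics for a quadratic Hamiltonian on
an interval. Let `A = [α,β]` with `α < β`, let `μ` be the uniform probability measure on
`[α,β]`, and for `τ > 0` set
`𝔥_τ(p) = -τ·ln ∫_A exp(-(p·a + a²/2)/τ) μ(da)` and
`𝔥(p) = min_{a∈[α,β]} (p·a + a²/2)`. Then for every `M > 0` there exist `τ₀ > 0` and
`C ≥ 0` such that `0 ≤ 𝔥_τ(p) - 𝔥(p) ≤ C·τ·ln(1/τ)` for all `p ∈ [-M,M]` and
`τ ∈ (0,τ₀]`. -/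
theorem laplace_asymptotics_quadratic_interval
    (α β : ℝ) (hαβ : α < β)
    (μ : Measure ℝ) (hμ : μ = (volume (Set.Icc α β))⁻¹ • volume.restrict (Set.Icc α β))
    (𝔥τ : ℝ → ℝ → ℝ)
    (h𝔥τ : ∀ τ p, 𝔥τ τ p = -τ * Real.log (∫ a, Real.exp (-(p * a + a ^ 2 / 2) / τ) ∂μ))
    (𝔥 : ℝ → ℝ)
    (h𝔥 : ∀ p, 𝔥 p = sInf ((fun a => p * a + a ^ 2 / 2) '' Set.Icc α β)) :
    ∀ M > (0 : ℝ), ∃ τ₀ > (0 : ℝ), ∃ C ≥ (0 : ℝ),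
      ∀ p ∈ Set.Icc (-M) M, ∀ τ : ℝ, 0 < τ → τ ≤ τ₀ →
        0 ≤ 𝔥τ τ p - 𝔥 p ∧ 𝔥τ τ p - 𝔥 p ≤ C * τ * Real.log (1 / τ) := by
  intro M hM
  have hβα : (0:ℝ) < β - α := by linarith
  set R : ℝ := max |α| |β| with hRdef
  have hR0 : (0:ℝ) ≤ R := le_trans (abs_nonneg α) (le_max_left _ _)
  set L : ℝ := M + R with hLdef
  have hL0 : (0:ℝ) ≤ L := by positivity
  refine ⟨min (Real.exp (-1)) ((β - α)/2), by positivity,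
    1 + |Real.log (β - α)| + L, by positivity, ?_⟩
  intro p hp τ hτ hττ₀
  have hτe : τ ≤ Real.exp (-1) := le_trans hττ₀ (min_le_left _ _)
  have hτβ : τ ≤ (β - α)/2 := le_trans hττ₀ (min_le_right _ _)
  -- log(1/τ) ≥ 1
  have hlog1 : (1:ℝ) ≤ Real.log (1/τ) := by
    rw [Real.le_log_iff_exp_le (by positivity), le_div_iff₀ hτ]
    calc Real.exp 1 * τ ≤ Real.exp 1 * Real.exp (-1) :=
          mul_le_mul_of_nonneg_left hτe (Real.exp_pos 1).le
      _ = 1 := by rw [← Real.exp_add]; norm_num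
  -- the minimizer
  set f : ℝ → ℝ := fun a => p * a + a ^ 2 / 2 with hfdef
  have hfc : Continuous f := by fun_prop
  obtain ⟨x, hxmem, hxmin⟩ := isCompact_Icc.exists_isMinOn (Set.nonempty_Icc.2 hαβ.le)
    hfc.continuousOn (f := f)
  have hm : 𝔥 p = f x := by
    rw [h𝔥]
    refine IsLeast.csInf_eq ⟨Set.mem_image_of_mem _ hxmem, ?_⟩
    rintro y ⟨a, ha, rfl⟩
    exact hxmin ha
  set m : ℝ := f x with hmdef
  -- bounds on members of Icc
  have habs : ∀ a ∈ Set.Icc α β, |a| ≤ R := by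
    intro a ha
    have h1 : |α| ≤ R := le_max_left _ _
    have h2 : |β| ≤ R := le_max_right _ _
    have h3 := neg_abs_le α
    have h4 := le_abs_self β
    rw [abs_le]; exact ⟨by linarith [ha.1], by linarith [ha.2]⟩
  have hpabs : |p| ≤ M := abs_le.2 ⟨hp.1, hp.2⟩
  -- the subinterval J
  set s : ℝ := if x ≤ (α+β)/2 then x else x - τ with hsdef
  have hsub : Set.Icc s (s + τ) ⊆ Set.Icc α β := by
    rcases le_or_gt x ((α+β)/2) with h | h
    · rw [hsdef, if_pos h]
      exact Set.Icc_subset_Icc hxmem.1 (by linarith)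
    · rw [hsdef, if_neg (not_le.2 h)]
      exact Set.Icc_subset_Icc (by linarith) (by linarith [hxmem.2])
  have hxJ : x ∈ Set.Icc s (s + τ) := by
    rcases le_or_gt x ((α+β)/2) with h | h
    · rw [hsdef, if_pos h]; exact ⟨le_refl x, by linarith⟩
    · rw [hsdef, if_neg (not_le.2 h)]; exact ⟨by linarith, by linarith⟩
  -- f is close to m on J
  have hfJ : ∀ a ∈ Set.Icc s (s + τ), f a ≤ m + L * τ := by
    intro a ha
    have haI : a ∈ Set.Icc α β := hsub ha
    have h1 : |a - x| ≤ τ := by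
      rw [abs_le]; exact ⟨by linarith [ha.1, hxJ.2], by linarith [ha.2, hxJ.1]⟩
    have hax : |x| ≤ R := habs x hxmem
    have haa : |a| ≤ R := habs a haI
    have h3 : |(a + x)/2| ≤ R := by
      rw [abs_div, abs_two, div_le_iff₀ (by norm_num : (0:ℝ) < 2)]
      calc |a + x| ≤ |a| + |x| := abs_add_le _ _
        _ ≤ R * 2 := by linarith
    have h2 : |p + (a + x)/2| ≤ M + R := (abs_add_le _ _).trans (by linarith)
    have hkey : f a - m = (a - x) * (p + (a + x)/2) := by
      simp only [hmdef, hfdef]; ring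
    have hfin : f a - m ≤ τ * (M + R) :=
      calc f a - m ≤ |f a - m| := le_abs_self _
        _ = |a - x| * |p + (a + x)/2| := by rw [hkey, abs_mul]
        _ ≤ τ * (M + R) := mul_le_mul h1 h2 (abs_nonneg _) (le_trans (abs_nonneg _) h1)
    simp only [hLdef]; linarith
  -- integrand
  set g : ℝ → ℝ := fun a => Real.exp (-(p * a + a ^ 2 / 2) / τ) with hgdef
  have hgc : Continuous g := by fun_prop
  have hgint : IntegrableOn g (Set.Icc α β) := hgc.integrableOn_Icc
  set I : ℝ := ∫ a in Set.Icc α β, g a with hIdef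
  have hconst : ∀ (c : ℝ) (u v : ℝ), u ≤ v →
      (∫ _ in Set.Icc u v, c ∂(volume : Measure ℝ)) = (v - u) * c := by
    intro c u v huv
    rw [setIntegral_const, measureReal_def, Real.volume_Icc, ENNReal.toReal_ofReal (by linarith), smul_eq_mul]
  -- upper bound for I
  have hIub : I ≤ (β - α) * Real.exp (-m / τ) := by
    calc I ≤ ∫ _ in Set.Icc α β, Real.exp (-m / τ) := by
          apply setIntegral_mono_on hgint (integrableOn_const (by
            rw [Real.volume_Icc]; exact ENNReal.ofReal_ne_top)) measurableSet_Icc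
          intro a ha
          have hma : m ≤ f a := hxmin ha
          have : -(p * a + a ^ 2 / 2) / τ ≤ -m / τ := by
            apply div_le_div_of_nonneg_right ?_ hτ.le |>.trans_eq rfl
            simp only [hfdef] at hma; linarith
          exact Real.exp_le_exp.2 this
      _ = (β - α) * Real.exp (-m / τ) := hconst _ _ _ hαβ.le
  -- lower bound for I
  have hIlb : τ * Real.exp (-(m + L * τ) / τ) ≤ I := by
    calc τ * Real.exp (-(m + L * τ) / τ)
        = ∫ _ in Set.Icc s (s + τ), Real.exp (-(m + L * τ) / τ) := by
          rw [hconst _ _ _ (by linarith)]; ring_nf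
      _ ≤ ∫ a in Set.Icc s (s + τ), g a := by
          apply setIntegral_mono_on (integrableOn_const (by
            rw [Real.volume_Icc]; exact ENNReal.ofReal_ne_top))
            (hgint.mono_set hsub) measurableSet_Icc
          intro a ha
          have := hfJ a ha
          apply Real.exp_le_exp.2
          apply div_le_div_of_nonneg_right ?_ hτ.le
          simp only [hfdef] at this; linarith
      _ ≤ I := setIntegral_mono_set hgint
            (Filter.Eventually.of_forall fun a => (Real.exp_pos _).le)
            (HasSubset.Subset.eventuallyLE hsub)
  have hI0 : 0 < I := lt_of_lt_of_le (by positivity) hIlb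
  -- the μ-integral
  have hS : (∫ a, Real.exp (-(p * a + a ^ 2 / 2) / τ) ∂μ) = (β - α)⁻¹ * I := by
    rw [hμ, integral_smul_measure, Real.volume_Icc, ← ENNReal.ofReal_inv_of_pos hβα,
      ENNReal.toReal_ofReal (by positivity), smul_eq_mul]
  have hS0 : (0:ℝ) < (β - α)⁻¹ * I := by positivity
  rw [h𝔥τ, hm, hS]
  constructor
  · -- lower bound
    have hle : (β - α)⁻¹ * I ≤ Real.exp (-m / τ) := by
      rw [inv_mul_le_iff₀ hβα] at *
      calc I ≤ (β - α) * Real.exp (-m / τ) := hIub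
        _ = _ := by ring
    have hlog : Real.log ((β - α)⁻¹ * I) ≤ -m / τ := by
      calc Real.log ((β - α)⁻¹ * I) ≤ Real.log (Real.exp (-m / τ)) :=
            Real.log_le_log hS0 hle
        _ = -m / τ := Real.log_exp _
    have hth := mul_le_mul_of_nonneg_left hlog hτ.le
    have h2 : τ * (-m / τ) = -m := by field_simp
    rw [h2] at hth
    linarith
  · -- upper bound
    have hge : τ / (β - α) * Real.exp (-(m + L * τ) / τ) ≤ (β - α)⁻¹ * I := by
      rw [div_eq_mul_inv, mul_comm τ (β - α)⁻¹, mul_assoc]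
      exact mul_le_mul_of_nonneg_left hIlb (by positivity)
    have hlog : Real.log τ - Real.log (β - α) + (-(m + L * τ) / τ)
        ≤ Real.log ((β - α)⁻¹ * I) := by
      have := Real.log_le_log (by positivity) hge
      rwa [Real.log_mul (by positivity) (Real.exp_ne_zero _), Real.log_exp,
        Real.log_div hτ.ne' hβα.ne'] at this
    have hmul := mul_le_mul_of_nonneg_left hlog hτ.le
    have hlogτ : Real.log (1/τ) = -Real.log τ := by rw [one_div, Real.log_inv]
    have habslog : Real.log (β - α) ≤ |Real.log (β - α)| := le_abs_self _
    have hexpand : τ * (Real.log τ - Real.log (β - α) + (-(m + L * τ) / τ))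
        = τ * Real.log τ - τ * Real.log (β - α) - m - L * τ := by field_simp; ring
    rw [hexpand] at hmul
    -- hmul : τ*log τ - τ*log(β-α) - m - L*τ ≤ τ * log((β-α)⁻¹ * I)
    -- goal : -τ * log((β-α)⁻¹*I) - m ≤ (1 + |log(β-α)| + L) * τ * log(1/τ)
    have h1 : -τ * Real.log τ = τ * Real.log (1/τ) := by rw [hlogτ]; ring
    nlinarith [mul_le_mul_of_nonneg_left hlog1 hτ.le,
      mul_le_mul_of_nonneg_left habslog hτ.le,
      mul_le_mul_of_nonneg_left hlog1 (mul_nonneg hτ.le hL0),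
      mul_le_mul_of_nonneg_left hlog1 (mul_nonneg hτ.le (abs_nonneg (Real.log (β - α))))]
end

section
/- Let A be a measurable space, μ a probability measure on A, and Z, Z' : A → ℝ bounded measurable functions. Then the real function t ↦ KL( π(Z + t·Z') | μ ) is differentiable at t = 0, with derivative ∫_A ( Z(a) - ln ∫_A e^{Z} dμ ) · ( Z'(a) - ∫_A Z' dπ(Z) ) π(Z)(da). -/
open MeasureTheory
open scoped ENNReal NNReal

section Aux

variable {A : Type*} [MeasurableSpace A]

lemma integrable_of_bdd (μ : Measure A) [IsProbabilityMeasure μ] {f : A → ℝ}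
    (hm : AEStronglyMeasurable f μ) {C : ℝ} (hb : ∀ a, |f a| ≤ C) : Integrable f μ :=
  (integrable_const C).mono' hm (Filter.Eventually.of_forall fun a => by
    simpa [Real.norm_eq_abs] using hb a)

lemma exp_integral_pos (μ : Measure A) [IsProbabilityMeasure μ] {W : A → ℝ}
    (hW : Measurable W) {C : ℝ} (hb : ∀ a, |W a| ≤ C) :
    0 < ∫ a, Real.exp (W a) ∂μ := by
  have hexp_int : Integrable (fun a => Real.exp (W a)) μ :=
    integrable_of_bdd μ hW.exp.aestronglyMeasurable (C := Real.exp C) fun a => by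
      rw [abs_of_nonneg (Real.exp_nonneg _)]
      exact Real.exp_le_exp.2 (abs_le.1 (hb a)).2
  have h1 : ∫ _, Real.exp (-C) ∂μ ≤ ∫ a, Real.exp (W a) ∂μ :=
    integral_mono (integrable_const _) hexp_int fun a =>
      Real.exp_le_exp.2 (abs_le.1 (hb a)).1
  calc (0:ℝ) < Real.exp (-C) := Real.exp_pos _
    _ = ∫ _, Real.exp (-C) ∂μ := by simp
    _ ≤ _ := h1

lemma gibbs_integral (μ : Measure A) {W : A → ℝ} (hW : Measurable W) (g : A → ℝ) :
    ∫ a, g a ∂(gibbs μ W)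
      = ∫ a, (Real.exp (W a) / ∫ a', Real.exp (W a') ∂μ) * g a ∂μ := by
  set E := ∫ a', Real.exp (W a') ∂μ with hE
  have hEnn : 0 ≤ E := integral_nonneg fun a => (Real.exp_nonneg _)
  have hnn : ∀ a, 0 ≤ Real.exp (W a) / E :=
    fun a => div_nonneg (Real.exp_nonneg _) hEnn
  have hmeas : Measurable fun a => (Real.exp (W a) / E).toNNReal :=
    (hW.exp.div_const E).real_toNNReal
  rw [gibbs]
  have h : (fun a => ENNReal.ofReal (Real.exp (W a) / E))
      = fun a => ((fun a => (Real.exp (W a) / E).toNNReal) a : ℝ≥0∞) := rfl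
  rw [h, integral_withDensity_eq_integral_smul hmeas]
  congr 1
  funext a
  simp [NNReal.smul_def, Real.coe_toNNReal _ (hnn a)]

lemma KLreal_gibbs (μ : Measure A) [IsProbabilityMeasure μ] {W : A → ℝ}
    (hW : Measurable W) {C : ℝ} (hb : ∀ a, |W a| ≤ C) :
    KLreal (gibbs μ W) μ
      = (∫ a, W a * Real.exp (W a) ∂μ) / (∫ a, Real.exp (W a) ∂μ)
        - Real.log (∫ a, Real.exp (W a) ∂μ) := by
  have hbC : ∀ a, |W a| ≤ |C| := fun a => (hb a).trans (le_abs_self _)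
  have hC0 : (0:ℝ) ≤ |C| := abs_nonneg _
  set E := ∫ a', Real.exp (W a') ∂μ with hEdef
  have hEpos : 0 < E := exp_integral_pos μ hW hbC
  have hexp_int : Integrable (fun a => Real.exp (W a)) μ :=
    integrable_of_bdd μ hW.exp.aestronglyMeasurable (C := Real.exp |C|) fun a => by
      rw [abs_of_nonneg (Real.exp_nonneg _)]
      exact Real.exp_le_exp.2 (abs_le.1 (hbC a)).2
  have hWexp_int : Integrable (fun a => W a * Real.exp (W a)) μ :=
    integrable_of_bdd μ (hW.mul hW.exp).aestronglyMeasurable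
      (C := |C| * Real.exp |C|) fun a => by
      rw [abs_mul, abs_of_nonneg (Real.exp_nonneg _)]
      exact mul_le_mul (hbC a) (Real.exp_le_exp.2 (abs_le.1 (hbC a)).2)
        (Real.exp_nonneg _) hC0
  have hac : gibbs μ W ≪ μ := withDensity_absolutelyContinuous μ _
  have hrn : (gibbs μ W).rnDeriv μ =ᵐ[μ] fun a => ENNReal.ofReal (Real.exp (W a) / E) :=
    Measure.rnDeriv_withDensity μ ((hW.exp.div_const E).ennreal_ofReal)
  have h1 : (fun a => Real.log ((gibbs μ W).rnDeriv μ a).toReal)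
      =ᵐ[gibbs μ W] fun a => W a - Real.log E := by
    filter_upwards [hrn.filter_mono hac.ae_le] with a ha
    rw [ha, ENNReal.toReal_ofReal (div_nonneg (Real.exp_nonneg _) hEpos.le),
      Real.log_div (Real.exp_ne_zero _) hEpos.ne', Real.log_exp]
  rw [KLreal, integral_congr_ae h1, gibbs_integral μ hW]
  have h2 : (fun a => (Real.exp (W a) / E) * (W a - Real.log E))
      = fun a => (1 / E) * (W a * Real.exp (W a)) - (Real.log E / E) * Real.exp (W a) := by
    funext a; ring
  rw [h2, integral_sub (hWexp_int.const_mul _) (hexp_int.const_mul _),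
    integral_const_mul, integral_const_mul]
  rw [← hEdef]
  field_simp

end Aux

/-- For a probability measure `μ` and bounded measurable `Z, Z' : A → ℝ`,
the map `t ↦ KL(π(Z + t·Z')|μ)` is differentiable at `t = 0`, with derivative
`∫ (Z a - ln ∫ e^Z dμ) · (Z' a - ∫ Z' dπ(Z)) dπ(Z)(a)`. -/
theorem hasDerivAt_kl_gibbs
    {A : Type*} [MeasurableSpace A] (μ : Measure A) [IsProbabilityMeasure μ]
    (Z Z' : A → ℝ) (hZmeas : Measurable Z) (hZ'meas : Measurable Z')
    (hZb : ∃ C, ∀ a, |Z a| ≤ C) (hZ'b : ∃ C, ∀ a, |Z' a| ≤ C) :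
    HasDerivAt (fun t : ℝ => KLreal (gibbs μ fun a => Z a + t * Z' a) μ)
      (∫ a, (Z a - Real.log (∫ a', Real.exp (Z a') ∂μ))
          * (Z' a - ∫ a', Z' a' ∂(gibbs μ Z)) ∂(gibbs μ Z)) 0 := by
  obtain ⟨C₁, hC₁⟩ := hZb
  obtain ⟨C₂, hC₂⟩ := hZ'b
  set C : ℝ := |C₁| with hCdef
  set C' : ℝ := |C₂| with hC'def
  have hC : ∀ a, |Z a| ≤ C := fun a => (hC₁ a).trans (le_abs_self _)
  have hC' : ∀ a, |Z' a| ≤ C' := fun a => (hC₂ a).trans (le_abs_self _)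
  have hC0 : (0:ℝ) ≤ C := abs_nonneg _
  have hC'0 : (0:ℝ) ≤ C' := abs_nonneg _
  set K : ℝ := Real.exp (C + C') with hKdef
  have hK0 : (0:ℝ) ≤ K := Real.exp_nonneg _
  -- measurability of the perturbed exponent
  have hWmeas : ∀ t : ℝ, Measurable fun a => Z a + t * Z' a :=
    fun t => hZmeas.add (hZ'meas.const_mul t)
  have hWbd : ∀ t : ℝ, ∀ a, |Z a + t * Z' a| ≤ C + |t| * C' := fun t a => by
    calc |Z a + t * Z' a| ≤ |Z a| + |t * Z' a| := abs_add_le _ _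
      _ ≤ C + |t| * C' := by
          rw [abs_mul]
          exact add_le_add (hC a) (mul_le_mul_of_nonneg_left (hC' a) (abs_nonneg _))
  -- uniform bounds on the ball of radius 1
  have hball : ∀ t : ℝ, t ∈ Metric.ball (0:ℝ) 1 → ∀ a,
      Real.exp (Z a + t * Z' a) ≤ K := by
    intro t ht a
    rw [Metric.mem_ball, dist_zero_right, Real.norm_eq_abs] at ht
    refine Real.exp_le_exp.2 ?_
    have := hWbd t a
    have h1 : |t| * C' ≤ 1 * C' := mul_le_mul_of_nonneg_right ht.le hC'0
    nlinarith [abs_le.1 (hWbd t a)]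
  have hballW : ∀ t : ℝ, t ∈ Metric.ball (0:ℝ) 1 → ∀ a,
      |Z a + t * Z' a| ≤ C + C' := by
    intro t ht a
    rw [Metric.mem_ball, dist_zero_right, Real.norm_eq_abs] at ht
    have h1 : |t| * C' ≤ 1 * C' := mul_le_mul_of_nonneg_right ht.le hC'0
    nlinarith [hWbd t a]
  -- integrability helper
  have key : ∀ (f : A → ℝ) (D : ℝ), Measurable f → (∀ a, |f a| ≤ D) →
      Integrable (fun a => f a * Real.exp (Z a)) μ := by
    intro f D hf hfb
    refine integrable_of_bdd μ (hf.mul hZmeas.exp).aestronglyMeasurable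
      (C := |D| * Real.exp C) fun a => by
      rw [abs_mul, abs_of_nonneg (Real.exp_nonneg _)]
      exact mul_le_mul ((hfb a).trans (le_abs_self _))
        (Real.exp_le_exp.2 (abs_le.1 (hC a)).2) (Real.exp_nonneg _) (abs_nonneg _)
  have hint_exp : Integrable (fun a => Real.exp (Z a)) μ :=
    integrable_of_bdd μ hZmeas.exp.aestronglyMeasurable (C := Real.exp C) fun a => by
      rw [abs_of_nonneg (Real.exp_nonneg _)]
      exact Real.exp_le_exp.2 (abs_le.1 (hC a)).2
  -- derivative of E(t) = ∫ exp (Z + t Z')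
  have hptE : ∀ (t : ℝ) (a : A), HasDerivAt (fun s : ℝ => Real.exp (Z a + s * Z' a))
      (Z' a * Real.exp (Z a + t * Z' a)) t := by
    intro t a
    have h1 : HasDerivAt (fun s : ℝ => Z a + s * Z' a) (Z' a) t :=
      (hasDerivAt_mul_const (Z' a)).const_add (Z a)
    simpa [mul_comm] using h1.exp
  have hE := hasDerivAt_integral_of_dominated_loc_of_deriv_le (μ := μ)
    (F := fun (t : ℝ) a => Real.exp (Z a + t * Z' a))
    (F' := fun (t : ℝ) a => Z' a * Real.exp (Z a + t * Z' a))
    (bound := fun _ => C' * K) (x₀ := 0) (Metric.ball_mem_nhds 0 one_pos)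
    (Filter.Eventually.of_forall fun t => ((hWmeas t).exp).aestronglyMeasurable)
    (integrable_of_bdd μ ((hWmeas 0).exp).aestronglyMeasurable
      (C := Real.exp (C + |(0:ℝ)| * C')) fun a => by
        rw [abs_of_nonneg (Real.exp_nonneg _)]
        exact Real.exp_le_exp.2 (abs_le.1 (hWbd 0 a)).2)
    ((hZ'meas.mul (hWmeas 0).exp).aestronglyMeasurable)
    (Filter.Eventually.of_forall fun a t ht => by
      rw [Real.norm_eq_abs, abs_mul, abs_of_nonneg (Real.exp_nonneg _)]
      exact mul_le_mul (hC' a) (hball t ht a) (Real.exp_nonneg _) hC'0)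
    (integrable_const _)
    (Filter.Eventually.of_forall fun a t _ => hptE t a)
  -- derivative of G(t) = ∫ (Z + t Z') exp (Z + t Z')
  have hptG : ∀ (t : ℝ) (a : A), HasDerivAt
      (fun s : ℝ => (Z a + s * Z' a) * Real.exp (Z a + s * Z' a))
      (Z' a * Real.exp (Z a + t * Z' a)
        + (Z a + t * Z' a) * (Z' a * Real.exp (Z a + t * Z' a))) t := by
    intro t a
    have h1 : HasDerivAt (fun s : ℝ => Z a + s * Z' a) (Z' a) t :=
      (hasDerivAt_mul_const (Z' a)).const_add (Z a)
    have := h1.mul (hptE t a)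
    refine this.congr_deriv ?_
    ring
  have hG := hasDerivAt_integral_of_dominated_loc_of_deriv_le (μ := μ)
    (F := fun (t : ℝ) a => (Z a + t * Z' a) * Real.exp (Z a + t * Z' a))
    (F' := fun (t : ℝ) a => Z' a * Real.exp (Z a + t * Z' a)
        + (Z a + t * Z' a) * (Z' a * Real.exp (Z a + t * Z' a)))
    (bound := fun _ => C' * K + (C + C') * (C' * K)) (x₀ := 0) (Metric.ball_mem_nhds 0 one_pos)
    (Filter.Eventually.of_forall fun t =>
      ((hWmeas t).mul (hWmeas t).exp).aestronglyMeasurable)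
    (integrable_of_bdd μ ((hWmeas 0).mul (hWmeas 0).exp).aestronglyMeasurable
      (C := (C + |(0:ℝ)| * C') * Real.exp (C + |(0:ℝ)| * C')) fun a => by
        rw [abs_mul, abs_of_nonneg (Real.exp_nonneg _)]
        exact mul_le_mul (hWbd 0 a) (Real.exp_le_exp.2 (abs_le.1 (hWbd 0 a)).2)
          (Real.exp_nonneg _) (le_trans (abs_nonneg _) (hWbd 0 a)))
    ((hZ'meas.mul (hWmeas 0).exp).add
      ((hWmeas 0).mul (hZ'meas.mul (hWmeas 0).exp))).aestronglyMeasurable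
    (Filter.Eventually.of_forall fun a t ht => by
      have h1 : |Z' a * Real.exp (Z a + t * Z' a)| ≤ C' * K := by
        rw [abs_mul, abs_of_nonneg (Real.exp_nonneg _)]
        exact mul_le_mul (hC' a) (hball t ht a) (Real.exp_nonneg _) hC'0
      have h2 : |(Z a + t * Z' a) * (Z' a * Real.exp (Z a + t * Z' a))|
          ≤ (C + C') * (C' * K) := by
        rw [abs_mul]
        exact mul_le_mul (hballW t ht a) h1 (abs_nonneg _)
          (le_trans (abs_nonneg _) (hballW t ht a))
      calc ‖_‖ ≤ _ := abs_add_le _ _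
        _ ≤ C' * K + (C + C') * (C' * K) := add_le_add h1 h2)
    (integrable_const _)
    (Filter.Eventually.of_forall fun a t _ => hptG t a)
  -- positivity of E(0)
  have hE0pos : 0 < ∫ a, Real.exp (Z a + 0 * Z' a) ∂μ :=
    exp_integral_pos μ (hWmeas 0) (C := C + |(0:ℝ)| * C') (hWbd 0)
  -- rewrite the KL function
  have hfun : (fun t : ℝ => KLreal (gibbs μ fun a => Z a + t * Z' a) μ)
      = fun t : ℝ => (∫ a, (Z a + t * Z' a) * Real.exp (Z a + t * Z' a) ∂μ)
          / (∫ a, Real.exp (Z a + t * Z' a) ∂μ)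
          - Real.log (∫ a, Real.exp (Z a + t * Z' a) ∂μ) := by
    funext t
    exact KLreal_gibbs μ (hWmeas t) (hWbd t)
  rw [hfun]
  have hd := (hG.2.div hE.2 hE0pos.ne').sub (hE.2.log hE0pos.ne')
  convert hd using 1
  case e'_4 => exact rfl
  case e'_5 => exact rfl
  case e'_8 => exact rfl
  -- now prove the derivative values agree
  set E₀ : ℝ := ∫ a, Real.exp (Z a) ∂μ with hE₀def
  set P : ℝ := ∫ a, Z a * Real.exp (Z a) ∂μ with hPdef
  set Q : ℝ := ∫ a, Z' a * Real.exp (Z a) ∂μ with hQdef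
  set R : ℝ := ∫ a, Z a * Z' a * Real.exp (Z a) ∂μ with hRdef
  set L : ℝ := Real.log (∫ a', Real.exp (Z a') ∂μ) with hLdef
  have hE₀pos : 0 < E₀ := exp_integral_pos μ hZmeas hC
  have hintP : Integrable (fun a => Z a * Real.exp (Z a)) μ := key Z C hZmeas hC
  have hintQ : Integrable (fun a => Z' a * Real.exp (Z a)) μ := key Z' C' hZ'meas hC'
  have hintR : Integrable (fun a => Z a * Z' a * Real.exp (Z a)) μ :=
    key (fun a => Z a * Z' a) (C * C') (hZmeas.mul hZ'meas) fun a => by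
      rw [abs_mul]; exact mul_le_mul (hC a) (hC' a) (abs_nonneg _) hC0
  -- express m = ∫ Z' dπ(Z)
  have hm : (∫ a', Z' a' ∂(gibbs μ Z)) = Q / E₀ := by
    rw [gibbs_integral μ hZmeas Z']
    have h : (fun a => (Real.exp (Z a) / ∫ a', Real.exp (Z a') ∂μ) * Z' a)
        = fun a => (1 / E₀) * (Z' a * Real.exp (Z a)) := by
      funext a; rw [hE₀def]; ring
    rw [h, integral_const_mul]
    field_simp
    rfl
  -- express target integral
  have hT : (∫ a, (Z a - L) * (Z' a - Q / E₀) ∂(gibbs μ Z))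
      = (1 / E₀) * R - ((Q / E₀) / E₀) * P - (L / E₀) * Q + (L * (Q / E₀) / E₀) * E₀ := by
    rw [gibbs_integral μ hZmeas]
    have h : (fun a => (Real.exp (Z a) / ∫ a', Real.exp (Z a') ∂μ)
          * ((Z a - L) * (Z' a - Q / E₀)))
        = fun a => (1 / E₀) * (Z a * Z' a * Real.exp (Z a))
            - ((Q / E₀) / E₀) * (Z a * Real.exp (Z a))
            - (L / E₀) * (Z' a * Real.exp (Z a))
            + (L * (Q / E₀) / E₀) * Real.exp (Z a) := by
      funext a; rw [hE₀def]; ring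
    have i1 : Integrable (fun a => (1 / E₀) * (Z a * Z' a * Real.exp (Z a))
        - ((Q / E₀) / E₀) * (Z a * Real.exp (Z a))) μ :=
      (hintR.const_mul _).sub (hintP.const_mul _)
    have i2 : Integrable (fun a => (1 / E₀) * (Z a * Z' a * Real.exp (Z a))
        - ((Q / E₀) / E₀) * (Z a * Real.exp (Z a))
        - (L / E₀) * (Z' a * Real.exp (Z a))) μ := i1.sub (hintQ.const_mul _)
    rw [h, integral_add i2 (hint_exp.const_mul _),
      integral_sub i1 (hintQ.const_mul _),
      integral_sub (hintR.const_mul _) (hintP.const_mul _),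
      integral_const_mul, integral_const_mul, integral_const_mul, integral_const_mul]
  rw [hm, hT]
  -- identify the simple integrals at t = 0
  have e1 : (∫ a, Real.exp (Z a + 0 * Z' a) ∂μ) = E₀ := by
    rw [hE₀def]; congr 1; funext a; norm_num
  have e2 : (∫ a, Z' a * Real.exp (Z a + 0 * Z' a) ∂μ) = Q := by
    rw [hQdef]; congr 1; funext a; norm_num
  have e3 : (∫ a, (Z a + 0 * Z' a) * Real.exp (Z a + 0 * Z' a) ∂μ) = P := by
    rw [hPdef]; congr 1; funext a; norm_num
  have e4 : (∫ a, Z' a * Real.exp (Z a + 0 * Z' a)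
      + (Z a + 0 * Z' a) * (Z' a * Real.exp (Z a + 0 * Z' a)) ∂μ) = Q + R := by
    have h : (fun a => Z' a * Real.exp (Z a + 0 * Z' a)
        + (Z a + 0 * Z' a) * (Z' a * Real.exp (Z a + 0 * Z' a)))
        = fun a => Z' a * Real.exp (Z a) + Z a * Z' a * Real.exp (Z a) := by
      funext a; ring_nf
    rw [h, integral_add hintQ hintR]
  rw [e1, e2, e3, e4]
  field_simp
  ring
end

section
/- Let A be a measurable space, μ a probability measure on A, ν a probability measure on A with ν ≪ μ, and Z : A → ℝ a bounded measurable function. Then KL( ν | π(Z) ) = KL( ν | μ ) - ∫_A Z dν + ln ∫_A e^{Z} dμ, as an identity in (-∞, +∞]; consequently KL( ν | π(Z) ) ≤ KL( ν | μ ) + 2·‖Z‖_∞. -/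
open MeasureTheory Classical

/-- The Kullback–Leibler divergence `KL(ν|ρ) = ∫ ln (dν/dρ) dν` if `ν ≪ ρ` (and the integral
makes sense), and `+∞` otherwise, with values in the extended reals. -/
noncomputable def KL {A : Type*} [MeasurableSpace A] (ν ρ : Measure A) : EReal :=
  if ν ≪ ρ ∧ Integrable (fun a => Real.log (ν.rnDeriv ρ a).toReal) ν then
    ((∫ a, Real.log (ν.rnDeriv ρ a).toReal ∂ν : ℝ) : EReal)
  else ⊤

/-- change of reference measure in the KL divergence. For a probability
measure `μ`, a probability measure `ν ≪ μ` and a bounded measurable `Z : A → ℝ`,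
`KL(ν|π(Z)) = KL(ν|μ) - ∫ Z dν + ln ∫ e^Z dμ` as an identity in `(-∞,+∞]`; consequently
`KL(ν|π(Z)) ≤ KL(ν|μ) + 2‖Z‖_∞`. -/
theorem kl_change_of_reference_gibbs
    {A : Type*} [MeasurableSpace A] (μ : Measure A) [IsProbabilityMeasure μ]
    (ν : Measure A) [IsProbabilityMeasure ν] (hν : ν ≪ μ)
    (Z : A → ℝ) (hZmeas : Measurable Z) (hZb : ∃ C, ∀ a, |Z a| ≤ C) :
    KL ν (gibbs μ Z)
        = KL ν μ + ((-∫ a, Z a ∂ν + Real.log (∫ a, Real.exp (Z a) ∂μ) : ℝ) : EReal) ∧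
    KL ν (gibbs μ Z) ≤ KL ν μ + ((2 * ⨆ a, |Z a| : ℝ) : EReal) := by
  classical
  obtain ⟨C, hC⟩ := hZb
  -- basic integrability facts
  have hexp : Integrable (fun x => Real.exp (Z x)) μ := by
    refine (integrable_const (Real.exp C)).mono'
      (hZmeas.exp.aestronglyMeasurable) (ae_of_all _ fun x => ?_)
    rw [Real.norm_eq_abs, abs_of_pos (Real.exp_pos _)]
    exact Real.exp_le_exp.mpr ((le_abs_self _).trans (hC x))
  set c : ℝ := ∫ a, Real.exp (Z a) ∂μ with hcdef
  have hc : 0 < c := integral_exp_pos hexp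
  have hg : gibbs μ Z = μ.tilted Z := rfl
  have hZint : Integrable Z ν :=
    (integrable_const C).mono' hZmeas.aestronglyMeasurable (ae_of_all _ fun x => hC x)
  have hconst : Integrable (fun x => Real.log c - Z x) ν := (integrable_const _).sub hZint
  -- positivity of the density a.e. ν
  have hpos : ∀ᵐ x ∂ν, 0 < ((ν.rnDeriv μ x).toReal) := by
    filter_upwards [Measure.rnDeriv_pos hν, hν.ae_le (Measure.rnDeriv_ne_top ν μ)]
      with x hx hx'
    exact ENNReal.toReal_pos hx.ne' hx'
  -- key pointwise identity
  have h1 : (fun x => Real.log (ν.rnDeriv (gibbs μ Z) x).toReal)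
      =ᵐ[ν] fun x => Real.log (ν.rnDeriv μ x).toReal + (Real.log c - Z x) := by
    rw [hg]
    filter_upwards [(toReal_rnDeriv_tilted_right ν μ hexp).filter_mono hν.ae_le, hpos]
      with x hx hpx
    rw [hx, Real.log_mul (by positivity) hpx.ne', Real.log_mul (Real.exp_pos _).ne' hc.ne',
      Real.log_exp]
    ring
  have hac : ν ≪ gibbs μ Z := by rw [hg]; exact hν.trans (absolutelyContinuous_tilted hexp)
  set L : A → ℝ := fun x => Real.log (ν.rnDeriv μ x).toReal with hLdef
  have hIff : Integrable (fun x => Real.log (ν.rnDeriv (gibbs μ Z) x).toReal) ν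
      ↔ Integrable L ν := by
    constructor
    · intro h
      have := (h.congr h1).sub hconst
      exact this.congr (ae_of_all _ fun x => by simp [hLdef])
    · intro h
      exact (h.add hconst).congr h1.symm
  -- the equality
  have heq : KL ν (gibbs μ Z)
      = KL ν μ + ((-∫ a, Z a ∂ν + Real.log c : ℝ) : EReal) := by
    by_cases hL : Integrable L ν
    · rw [KL, KL, if_pos ⟨hac, hIff.mpr hL⟩, if_pos ⟨hν, hL⟩]
      rw [integral_congr_ae h1, integral_add hL hconst, integral_sub (integrable_const _) hZint,
        integral_const]
      simp only [measure_univ, probReal_univ, ENNReal.toReal_one, smul_eq_mul, one_mul]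
      rw [← EReal.coe_add]
      congr 1
      ring
    · rw [KL, KL, if_neg, if_neg]
      · rw [EReal.top_add_coe]
      · rintro ⟨-, h⟩; exact hL h
      · rintro ⟨-, h⟩; exact hL (hIff.mp h)
  refine ⟨heq, ?_⟩
  -- the bound
  have hA : Nonempty A := by
    by_contra h
    have : (Set.univ : Set A) = ∅ := Set.univ_eq_empty_iff.mpr (not_nonempty_iff.mp h)
    have h1 : μ Set.univ = 1 := measure_univ
    rw [this] at h1
    simp at h1
  set S : ℝ := ⨆ a, |Z a| with hSdef
  have hbdd : BddAbove (Set.range fun a => |Z a|) := ⟨C, by rintro _ ⟨a, rfl⟩; exact hC a⟩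
  have hZS : ∀ a, |Z a| ≤ S := fun a => le_ciSup hbdd a
  have hb1 : -∫ a, Z a ∂ν ≤ S := by
    have h := norm_integral_le_of_norm_le_const (μ := ν) (f := Z) (C := S)
      (ae_of_all _ fun x => by rw [Real.norm_eq_abs]; exact hZS x)
    simp only [measure_univ, probReal_univ, ENNReal.toReal_one, mul_one] at h
    calc -∫ a, Z a ∂ν ≤ |∫ a, Z a ∂ν| := neg_le_abs _
      _ ≤ S := h
  have hb2 : Real.log c ≤ S := by
    rw [Real.log_le_iff_le_exp hc]
    calc c ≤ ∫ _, Real.exp S ∂μ := by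
          refine integral_mono hexp (integrable_const _) fun x => ?_
          exact Real.exp_le_exp.mpr ((le_abs_self _).trans (hZS x))
      _ = Real.exp S := by simp
  rw [heq]
  refine add_le_add_right (EReal.coe_le_coe_iff.mpr ?_) _
  linarith
end

section
/- Let A be a measurable space, μ a probability measure on A, Z, Z' : A → ℝ bounded measurable functions, and φ : A → ℝ a bounded measurable function. Then the real function t ↦ ∫_A φ(a) π(Z + t·Z')(da) is differentiable at t = 0, with derivative ∫_A φ(a)·( Z'(a) - ∫_A Z' dπ(Z) ) π(Z)(da). -/
open MeasureTheory

lemma bdd_integrable {A : Type*} [MeasurableSpace A] {μ : Measure A} [IsFiniteMeasure μ]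
    {f : A → ℝ} (hm : AEStronglyMeasurable f μ) {C : ℝ} (hb : ∀ a, |f a| ≤ C) :
    Integrable f μ :=
  (integrable_const C).mono' hm (Filter.Eventually.of_forall fun a => by simpa using hb a)

lemma integral_gibbs_eq {A : Type*} [MeasurableSpace A] (μ : Measure A) {Z : A → ℝ}
    (hZ : Measurable Z) (g : A → ℝ) :
    ∫ a, g a ∂(gibbs μ Z)
      = (∫ a, g a * Real.exp (Z a) ∂μ) / ∫ a, Real.exp (Z a) ∂μ := by
  set D := ∫ a, Real.exp (Z a) ∂μ with hD
  have hDnn : 0 ≤ D := integral_nonneg fun a => (Real.exp_pos _).le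
  have hmeas : Measurable fun a => (Real.exp (Z a) / D).toNNReal :=
    (hZ.exp.div_const D).real_toNNReal
  have : gibbs μ Z = μ.withDensity fun a => ((Real.exp (Z a) / D).toNNReal : ENNReal) := rfl
  rw [this, integral_withDensity_eq_integral_smul hmeas, ← integral_div]
  refine integral_congr_ae (Filter.Eventually.of_forall fun a => ?_)
  have hnn : 0 ≤ Real.exp (Z a) / D := div_nonneg (Real.exp_pos _).le hDnn
  simp only [NNReal.smul_def, Real.coe_toNNReal _ hnn, smul_eq_mul]
  ring

/-- directional derivative of the Gibbs map. For a probability measure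
`μ`, bounded measurable `Z, Z' : A → ℝ` and a bounded measurable `φ : A → ℝ`, the map
`t ↦ ∫ φ dπ(Z + t·Z')` is differentiable at `t = 0` with derivative
`∫ φ(a)·(Z'(a) - ∫ Z' dπ(Z)) dπ(Z)(a)`. -/
theorem hasDerivAt_integral_gibbs
    {A : Type*} [MeasurableSpace A] (μ : Measure A) [IsProbabilityMeasure μ]
    (Z Z' φ : A → ℝ) (hZmeas : Measurable Z) (hZ'meas : Measurable Z')
    (hφmeas : Measurable φ)
    (hZb : ∃ C, ∀ a, |Z a| ≤ C) (hZ'b : ∃ C, ∀ a, |Z' a| ≤ C)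
    (hφb : ∃ C, ∀ a, |φ a| ≤ C) :
    HasDerivAt (fun t : ℝ => ∫ a, φ a ∂(gibbs μ fun a' => Z a' + t * Z' a'))
      (∫ a, φ a * (Z' a - ∫ a', Z' a' ∂(gibbs μ Z)) ∂(gibbs μ Z)) 0 := by
  obtain ⟨C, hC⟩ := hZb
  obtain ⟨C', hC'⟩ := hZ'b
  obtain ⟨Cφ, hCφ⟩ := hφb
  set D : ℝ → ℝ := fun t => ∫ a, Real.exp (Z a + t * Z' a) ∂μ with hDdef
  set N : ℝ → ℝ := fun t => ∫ a, φ a * Real.exp (Z a + t * Z' a) ∂μ with hNdef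
  set Dd : ℝ := ∫ a, Real.exp (Z a) * Z' a ∂μ with hDd
  set Nd : ℝ := ∫ a, φ a * (Real.exp (Z a) * Z' a) ∂μ with hNd
  -- basic bounds
  have hexp_bdd : ∀ t ∈ Metric.ball (0:ℝ) 1, ∀ a, Real.exp (Z a + t * Z' a) ≤ Real.exp (C + C') := by
    intro t ht a
    apply Real.exp_le_exp.2
    have h1 : Z a ≤ C := (abs_le.1 (hC a)).2
    have h2 : t * Z' a ≤ C' := by
      calc t * Z' a ≤ |t * Z' a| := le_abs_self _
        _ = |t| * |Z' a| := abs_mul _ _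
        _ ≤ 1 * C' := by
            apply mul_le_mul (le_of_lt (by simpa using ht)) (hC' a) (abs_nonneg _)
            norm_num
        _ = C' := one_mul _
    linarith
  -- positivity of D
  have hDpos : ∀ t, 0 < D t := by
    intro t
    apply integral_exp_pos
    apply bdd_integrable ((hZmeas.add ((hZ'meas.const_mul t))).exp).aestronglyMeasurable
      (C := Real.exp (C + |t| * C'))
    intro a
    rw [abs_of_nonneg (Real.exp_pos _).le]
    apply Real.exp_le_exp.2
    have h1 : Z a ≤ C := (abs_le.1 (hC a)).2
    have h2 : t * Z' a ≤ |t| * C' := by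
      calc t * Z' a ≤ |t * Z' a| := le_abs_self _
        _ = |t| * |Z' a| := abs_mul _ _
        _ ≤ |t| * C' := by
            apply mul_le_mul_of_nonneg_left (hC' a) (abs_nonneg _)
    show Z a + t * Z' a ≤ C + |t| * C'
    linarith
  -- derivative of D
  have hD' : HasDerivAt D Dd 0 := by
    have := (hasDerivAt_integral_of_dominated_loc_of_deriv_le (μ := μ)
      (F := fun t a => Real.exp (Z a + t * Z' a))
      (F' := fun t a => Real.exp (Z a + t * Z' a) * Z' a)
      (x₀ := (0:ℝ)) (bound := fun _ => Real.exp (C + C') * C')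
      (Metric.ball_mem_nhds 0 one_pos)
      (Filter.Eventually.of_forall fun t =>
        ((hZmeas.add (hZ'meas.const_mul t)).exp).aestronglyMeasurable)
      (by
        show Integrable (fun a => Real.exp (Z a + 0 * Z' a)) μ
        apply bdd_integrable ((hZmeas.add (hZ'meas.const_mul (0:ℝ))).exp).aestronglyMeasurable
          (C := Real.exp (C + C'))
        intro a
        rw [abs_of_nonneg (Real.exp_pos _).le]
        exact hexp_bdd 0 (Metric.mem_ball_self one_pos) a)
      (((hZmeas.add (hZ'meas.const_mul (0:ℝ))).exp.mul hZ'meas).aestronglyMeasurable)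
      (Filter.Eventually.of_forall fun a t ht => by
        rw [Real.norm_eq_abs, abs_mul, abs_of_nonneg (Real.exp_pos _).le]
        exact mul_le_mul (hexp_bdd t ht a) (hC' a) (abs_nonneg _) (Real.exp_pos _).le)
      (integrable_const _)
      (Filter.Eventually.of_forall fun a t ht => by
        simpa using (((hasDerivAt_mul_const (Z' a)).const_add (Z a)).exp))).2
    simpa using this
  -- derivative of N
  have hN' : HasDerivAt N Nd 0 := by
    have := (hasDerivAt_integral_of_dominated_loc_of_deriv_le (μ := μ)
      (F := fun t a => φ a * Real.exp (Z a + t * Z' a))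
      (F' := fun t a => φ a * (Real.exp (Z a + t * Z' a) * Z' a))
      (x₀ := (0:ℝ)) (bound := fun _ => Cφ * (Real.exp (C + C') * C'))
      (Metric.ball_mem_nhds 0 one_pos)
      (Filter.Eventually.of_forall fun t =>
        (hφmeas.mul ((hZmeas.add (hZ'meas.const_mul t)).exp)).aestronglyMeasurable)
      (by
        show Integrable (fun a => φ a * Real.exp (Z a + 0 * Z' a)) μ
        apply bdd_integrable
          (hφmeas.mul ((hZmeas.add (hZ'meas.const_mul (0:ℝ))).exp)).aestronglyMeasurable
          (C := Cφ * Real.exp (C + C'))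
        intro a
        show |φ a * Real.exp (Z a + 0 * Z' a)| ≤ _
        rw [abs_mul, abs_of_nonneg (Real.exp_pos _).le]
        exact mul_le_mul (hCφ a) (hexp_bdd 0 (Metric.mem_ball_self one_pos) a)
          (Real.exp_pos _).le (le_trans (abs_nonneg _) (hCφ a)))
      ((hφmeas.mul ((hZmeas.add (hZ'meas.const_mul (0:ℝ))).exp.mul hZ'meas)).aestronglyMeasurable)
      (Filter.Eventually.of_forall fun a t ht => by
        rw [Real.norm_eq_abs, abs_mul, abs_mul, abs_of_nonneg (Real.exp_pos _).le]
        refine mul_le_mul (hCφ a) (mul_le_mul (hexp_bdd t ht a) (hC' a) (abs_nonneg _)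
          (Real.exp_pos _).le) (mul_nonneg (Real.exp_pos _).le (abs_nonneg _))
          (le_trans (abs_nonneg _) (hCφ a)))
      (integrable_const _)
      (Filter.Eventually.of_forall fun a t ht => by
        simpa using ((((hasDerivAt_mul_const (Z' a)).const_add (Z a)).exp).const_mul (φ a)))).2
    simpa using this
  -- quotient rule
  have hquot : HasDerivAt (fun t => N t / D t)
      ((Nd * D 0 - N 0 * Dd) / D 0 ^ 2) 0 := hN'.div hD' (hDpos 0).ne'
  -- the function under consideration equals N/D
  have hfun : (fun t : ℝ => ∫ a, φ a ∂(gibbs μ fun a' => Z a' + t * Z' a'))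
      = fun t => N t / D t := by
    funext t
    exact integral_gibbs_eq μ (hZmeas.add (hZ'meas.const_mul t)) φ
  rw [hfun]
  -- the target value equals the quotient-rule value
  have hD00 : D 0 = ∫ a, Real.exp (Z a) ∂μ := by
    simp [hDdef]
  have hN00 : N 0 = ∫ a, φ a * Real.exp (Z a) ∂μ := by
    simp [hNdef]
  have hm : (∫ a', Z' a' ∂(gibbs μ Z)) = Dd / D 0 := by
    rw [integral_gibbs_eq μ hZmeas Z', hD00, hDd]
    congr 1
    exact integral_congr_ae (Filter.Eventually.of_forall fun a => mul_comm _ _)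
  have hi1 : Integrable (fun a => φ a * (Real.exp (Z a) * Z' a)) μ := by
    apply bdd_integrable (hφmeas.mul (hZmeas.exp.mul hZ'meas)).aestronglyMeasurable
      (C := Cφ * (Real.exp C * C'))
    intro a
    show |φ a * (Real.exp (Z a) * Z' a)| ≤ _
    rw [abs_mul, abs_mul, abs_of_nonneg (Real.exp_pos _).le]
    refine mul_le_mul (hCφ a) (mul_le_mul (Real.exp_le_exp.2 (abs_le.1 (hC a)).2) (hC' a)
      (abs_nonneg _) (Real.exp_pos _).le) (mul_nonneg (Real.exp_pos _).le (abs_nonneg _))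
      (le_trans (abs_nonneg _) (hCφ a))
  have hi2 : Integrable (fun a => φ a * Real.exp (Z a)) μ := by
    apply bdd_integrable (hφmeas.mul hZmeas.exp).aestronglyMeasurable (C := Cφ * Real.exp C)
    intro a
    show |φ a * Real.exp (Z a)| ≤ _
    rw [abs_mul, abs_of_nonneg (Real.exp_pos _).le]
    exact mul_le_mul (hCφ a) (Real.exp_le_exp.2 (abs_le.1 (hC a)).2) (Real.exp_pos _).le
      (le_trans (abs_nonneg _) (hCφ a))
  have hval : (∫ a, φ a * (Z' a - ∫ a', Z' a' ∂(gibbs μ Z)) ∂(gibbs μ Z))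
      = (Nd * D 0 - N 0 * Dd) / D 0 ^ 2 := by
    rw [integral_gibbs_eq μ hZmeas, hD00.symm, hm]
    have : (∫ a, φ a * (Z' a - Dd / D 0) * Real.exp (Z a) ∂μ)
        = Nd - (Dd / D 0) * N 0 := by
      rw [hNd, hN00]
      rw [show (fun a => φ a * (Z' a - Dd / D 0) * Real.exp (Z a))
          = fun a => φ a * (Real.exp (Z a) * Z' a) - (Dd / D 0) * (φ a * Real.exp (Z a)) by
        funext a; ring]
      rw [integral_sub hi1 (hi2.const_mul _), integral_const_mul]
    rw [this]
    have hne : D 0 ≠ 0 := (hDpos 0).ne'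
    field_simp
  rw [hval]
  exact hquot
end
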